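/- arXiv:1303.0523 — 4 statements merged into one kernel-verified Lean document; each statement's English description precedes it below -/
import Mathlib

section
/- For every real ε > 0 and every integer t ≥ 1, there exists a finite connected graph G with 2t ≤ |V(G)| such that VR(G, t) < ε. -/
open SimpleGraph

variable {V : Type*}

/-- Distance from a vertex to a finite set of vertices (`⊤` if the set is empty). -/
noncomputable def distToSet (G : SimpleGraph V) (S : Finset V) (v : V) : ℕ∞ :=
  S.inf fun a => (G.dist a v : ℕ∞)

/-- Player A's Voronoi score. -/
noncomputable def scoreA [Fintype V] (G : SimpleGraph V) (A B : Finset V) : ℝ :=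
  ∑ v : V,
    if distToSet G A v < distToSet G B v then 1
    else if distToSet G A v = distToSet G B v then 1/2 else 0

/-- Player B's Voronoi score. -/
noncomputable def scoreB [Fintype V] (G : SimpleGraph V) (A B : Finset V) : ℝ :=
  ∑ v : V,
    if distToSet G B v < distToSet G A v then 1
    else if distToSet G B v = distToSet G A v then 1/2 else 0

/-- Minimax value (A's score under optimal play) of the Voronoi game with `t`
remaining rounds, given the sets of vertices already claimed by A and B. -/
noncomputable def gameValue [Fintype V] [DecidableEq V] (G : SimpleGraph V) :
    ℕ → Finset V → Finset V → ℝ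
  | 0, A, B => scoreA G A B
  | (t+1), A, B =>
      sSup {r : ℝ | ∃ a, a ∉ A ∧ a ∉ B ∧
        r = sInf {s : ℝ | ∃ b, b ∉ insert a A ∧ b ∉ B ∧
          s = gameValue G t (insert a A) (insert b B)}}

/-- The Voronoi ratio of `G` for a `t`-round game. -/
noncomputable def VR [Fintype V] [DecidableEq V] (G : SimpleGraph V) (t : ℕ) : ℝ :=
  gameValue G t ∅ ∅ / (Fintype.card V)


section Generic
variable [Fintype V] [DecidableEq V] (G : SimpleGraph V)

lemma scoreA_nonneg (A B : Finset V) : 0 ≤ scoreA G A B := by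
  apply Finset.sum_nonneg; intro v _
  split
  · norm_num
  · split <;> norm_num

lemma setfin1 (A B : Finset V) (k : ℕ) :
    ({r : ℝ | ∃ a, a ∉ A ∧ a ∉ B ∧
        r = sInf {s : ℝ | ∃ b, b ∉ insert a A ∧ b ∉ B ∧
          s = gameValue G k (insert a A) (insert b B)}}).Finite := by
  apply Set.Finite.subset (Set.finite_range (fun a : V =>
    sInf {s : ℝ | ∃ b, b ∉ insert a A ∧ b ∉ B ∧
          s = gameValue G k (insert a A) (insert b B)}))
  rintro r ⟨a, _, _, rfl⟩
  exact ⟨a, rfl⟩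

lemma setfin2 (A B : Finset V) (k : ℕ) (a : V) :
    ({s : ℝ | ∃ b, b ∉ insert a A ∧ b ∉ B ∧
          s = gameValue G k (insert a A) (insert b B)}).Finite := by
  apply Set.Finite.subset (Set.finite_range (fun b : V =>
    gameValue G k (insert a A) (insert b B)))
  rintro s ⟨b, _, _, rfl⟩
  exact ⟨b, rfl⟩

lemma gameValue_nonneg : ∀ (k : ℕ) (A B : Finset V), 0 ≤ gameValue G k A B
  | 0, A, B => scoreA_nonneg G A B
  | (k+1), A, B => by
    rw [gameValue]
    rcases Set.eq_empty_or_nonempty {r : ℝ | ∃ a, a ∉ A ∧ a ∉ B ∧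
        r = sInf {s : ℝ | ∃ b, b ∉ insert a A ∧ b ∉ B ∧
          s = gameValue G k (insert a A) (insert b B)}} with h | h
    · rw [h, Real.sSup_empty]
    · obtain ⟨r, hr⟩ := h
      refine le_csSup_of_le ((setfin1 G A B k).bddAbove) hr ?_
      obtain ⟨a, _, _, rfl⟩ := hr
      rcases Set.eq_empty_or_nonempty {s : ℝ | ∃ b, b ∉ insert a A ∧ b ∉ B ∧
          s = gameValue G k (insert a A) (insert b B)} with h2 | h2
      · rw [h2, Real.sInf_empty]
      · apply Real.sInf_nonneg
        rintro s ⟨b, _, _, rfl⟩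
        exact gameValue_nonneg k _ _

lemma gameValue_le_of_strategy (M : ℝ) (hM : 0 ≤ M)
    (P : ℕ → Finset V → Finset V → Prop)
    (hbase : ∀ A B, P 0 A B → scoreA G A B ≤ M)
    (hstep : ∀ k A B, P (k+1) A B → ∀ a, a ∉ A → a ∉ B →
      ∃ b, b ∉ insert a A ∧ b ∉ B ∧ P k (insert a A) (insert b B)) :
    ∀ k A B, P k A B → gameValue G k A B ≤ M
  | 0, A, B, h => hbase A B h
  | (k+1), A, B, h => by
    rw [gameValue]
    rcases Set.eq_empty_or_nonempty {r : ℝ | ∃ a, a ∉ A ∧ a ∉ B ∧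
        r = sInf {s : ℝ | ∃ b, b ∉ insert a A ∧ b ∉ B ∧
          s = gameValue G k (insert a A) (insert b B)}} with hs | hs
    · rw [hs, Real.sSup_empty]; exact hM
    · apply csSup_le hs
      rintro r ⟨a, haA, haB, rfl⟩
      obtain ⟨b, hb1, hb2, hP⟩ := hstep k A B h a haA haB
      have hmem : gameValue G k (insert a A) (insert b B) ∈
          {s : ℝ | ∃ b, b ∉ insert a A ∧ b ∉ B ∧
          s = gameValue G k (insert a A) (insert b B)} := ⟨b, hb1, hb2, rfl⟩
      calc sInf _ ≤ gameValue G k (insert a A) (insert b B) :=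
            csInf_le ((setfin2 G A B k a).bddBelow) hmem
        _ ≤ M := gameValue_le_of_strategy M hM P hbase hstep k _ _ hP

lemma distToSet_lt (A B : Finset V) (v : V) (hA : A.Nonempty)
    (h : ∀ a ∈ A, ∃ b ∈ B, G.dist b v < G.dist a v) :
    distToSet G B v < distToSet G A v := by
  obtain ⟨a0, ha0, hinf⟩ := Finset.exists_mem_eq_inf A hA (fun a => (G.dist a v : ℕ∞))
  obtain ⟨b, hbB, hlt⟩ := h a0 ha0
  have h1 : distToSet G B v ≤ (G.dist b v : ℕ∞) := Finset.inf_le hbB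
  have h2 : distToSet G A v = (G.dist a0 v : ℕ∞) := hinf
  rw [h2]
  exact lt_of_le_of_lt h1 (by exact_mod_cast hlt)

lemma scoreA_le_compl (A B : Finset V) (Good : Finset V)
    (h : ∀ v ∈ Good, distToSet G B v < distToSet G A v) :
    scoreA G A B ≤ (Fintype.card V : ℝ) - Good.card := by
  have hb : scoreA G A B ≤ ∑ v : V, (if v ∈ Good then (0:ℝ) else 1) := by
    apply Finset.sum_le_sum; intro v _
    by_cases hv : v ∈ Good
    · have hlt := h v hv
      rw [if_pos hv, if_neg (by exact fun hc => absurd (lt_trans hc hlt) (lt_irrefl _)),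
        if_neg (by intro hc; rw [hc] at hlt; exact absurd hlt (lt_irrefl _))]
    · rw [if_neg hv]
      split
      · exact le_refl _
      · split <;> norm_num
  refine le_trans hb ?_
  have : ∑ v : V, (if v ∈ Good then (0:ℝ) else 1)
      = ∑ v : V, (1 - (if v ∈ Good then (1:ℝ) else 0)) := by
    apply Finset.sum_congr rfl; intro v _; split <;> norm_num
  rw [this, Finset.sum_sub_distrib]
  have h1 : ∑ v : V, (if v ∈ Good then (1:ℝ) else 0) = Good.card := by
    rw [Finset.sum_ite_mem]
    simp
  have h2 : ∑ _v : V, (1:ℝ) = (Fintype.card V : ℝ) := by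
    simp
  rw [h1, h2]

end Generic

section GraphLemmas
variable (G : SimpleGraph V)

lemma chain_walk (f : ℕ → V) : ∀ (L : ℕ), (∀ i < L, G.Adj (f i) (f (i+1))) →
    ∃ w : G.Walk (f 0) (f L), w.length = L := by
  intro L
  induction L with
  | zero => exact fun _ => ⟨SimpleGraph.Walk.nil, rfl⟩
  | succ L ih =>
    intro h
    obtain ⟨w, hw⟩ := ih (fun i hi => h i (Nat.lt_succ_of_lt hi))
    exact ⟨w.concat (h L (Nat.lt_succ_self L)), by rw [SimpleGraph.Walk.length_concat, hw]⟩

lemma dist_le_chain (f : ℕ → V) (L : ℕ) (h : ∀ i < L, G.Adj (f i) (f (i+1))) :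
    G.dist (f 0) (f L) ≤ L := by
  obtain ⟨w, hw⟩ := chain_walk G f L h
  have := SimpleGraph.dist_le w
  omega

lemma reachable_chain (f : ℕ → V) (L : ℕ) (h : ∀ i < L, G.Adj (f i) (f (i+1))) :
    G.Reachable (f 0) (f L) := by
  obtain ⟨w, _⟩ := chain_walk G f L h
  exact ⟨w⟩

lemma walk_lipschitz (φ : V → ℕ) (hφ : ∀ u v, G.Adj u v → φ u ≤ φ v + 1) :
    ∀ {u v : V}, (w : G.Walk u v) → φ u ≤ φ v + w.length := by
  intro u v w
  induction w with
  | nil => simp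
  | @cons a b c h' p ih =>
    have h1 := hφ a b h'
    simp only [SimpleGraph.Walk.length_cons]
    omega

lemma dist_ge_lipschitz (φ : V → ℕ) (hφ : ∀ u v, G.Adj u v → φ u ≤ φ v + 1)
    (u v : V) (hr : G.Reachable u v) : φ u ≤ φ v + G.dist u v := by
  obtain ⟨w, hw⟩ := hr.exists_walk_length_eq_dist
  have := walk_lipschitz G φ hφ w
  omega

end GraphLemmas

section Transport
variable {V' : Type*} (e : V ≃ V') (H : SimpleGraph V')

def emb : V ↪ V' := ⟨e, e.injective⟩

lemma comap_walk {u v : V'} (w : H.Walk u v) :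
    ∃ w' : (H.comap e).Walk (e.symm u) (e.symm v), w'.length = w.length := by
  induction w with
  | nil => exact ⟨SimpleGraph.Walk.nil, rfl⟩
  | @cons a b c h p ih =>
    obtain ⟨w', hw'⟩ := ih
    have hadj : (H.comap e).Adj (e.symm a) (e.symm b) := by
      show H.Adj (e (e.symm a)) (e (e.symm b))
      simpa using h
    exact ⟨SimpleGraph.Walk.cons hadj w', by simp [hw']⟩

lemma walk_comap {u v : V} (w : (H.comap e).Walk u v) :
    ∃ w' : H.Walk (e u) (e v), w'.length = w.length := by
  induction w with
  | nil => exact ⟨SimpleGraph.Walk.nil, rfl⟩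
  | @cons a b c h p ih =>
    obtain ⟨w', hw'⟩ := ih
    exact ⟨SimpleGraph.Walk.cons (show H.Adj (e a) (e b) from h) w', by simp [hw']⟩

lemma comap_reachable {u v : V} : (H.comap e).Reachable u v ↔ H.Reachable (e u) (e v) := by
  constructor
  · rintro ⟨w⟩
    obtain ⟨w', _⟩ := walk_comap e H w
    exact ⟨w'⟩
  · rintro ⟨w⟩
    obtain ⟨w', _⟩ := comap_walk e H w
    exact ⟨by simpa using w'⟩

lemma comap_connected (h : H.Connected) : (H.comap e).Connected := by
  rw [connected_iff]
  refine ⟨fun u v => ?_, ⟨e.symm (Classical.choice (h.nonempty))⟩⟩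
  rw [comap_reachable]
  exact h.preconnected _ _

lemma comap_dist (u v : V) : (H.comap e).dist u v = H.dist (e u) (e v) := by
  by_cases hr : H.Reachable (e u) (e v)
  · apply le_antisymm
    · obtain ⟨w, hw⟩ := hr.exists_walk_length_eq_dist
      obtain ⟨w', hw'⟩ := comap_walk e H w
      have h2 := SimpleGraph.dist_le (w'.copy (e.symm_apply_apply u) (e.symm_apply_apply v))
      rw [SimpleGraph.Walk.length_copy, hw', hw] at h2
      exact h2
    · have hr' : (H.comap e).Reachable u v := by rw [comap_reachable]; exact hr
      obtain ⟨w, hw⟩ := hr'.exists_walk_length_eq_dist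
      obtain ⟨w', hw'⟩ := walk_comap e H w
      have := SimpleGraph.dist_le w'
      omega
  · have hr' : ¬ (H.comap e).Reachable u v := by rw [comap_reachable]; exact hr
    rw [SimpleGraph.dist_eq_zero_of_not_reachable hr,
      SimpleGraph.dist_eq_zero_of_not_reachable hr']

lemma comap_distToSet (S : Finset V) (v : V) :
    distToSet (H.comap e) S v = distToSet H (S.map (emb e)) (e v) := by
  rw [distToSet, distToSet, Finset.inf_map]
  apply Finset.inf_congr rfl
  intro a _
  simp [Function.comp, emb, comap_dist]

lemma comap_scoreA [Fintype V] [Fintype V'] (A B : Finset V) :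
    scoreA (H.comap e) A B = scoreA H (A.map (emb e)) (B.map (emb e)) := by
  rw [scoreA, scoreA]
  rw [← Equiv.sum_comp e]
  apply Finset.sum_congr rfl
  intro v _
  rw [comap_distToSet, comap_distToSet]

@[simp] lemma emb_apply (x : V) : (emb e) x = e x := rfl

lemma mem_map_emb (x : V) (S : Finset V) : (e x) ∈ S.map (emb e) ↔ x ∈ S := by
  constructor
  · intro h
    obtain ⟨y, hy, hxy⟩ := Finset.mem_map.mp h
    have : y = x := e.injective (by simpa using hxy)
    rwa [← this]
  · intro h; exact Finset.mem_map_of_mem _ h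

lemma mem_map_emb' (x' : V') (S : Finset V) : x' ∈ S.map (emb e) ↔ e.symm x' ∈ S := by
  rw [← mem_map_emb e (e.symm x') S, Equiv.apply_symm_apply]

lemma comap_gameValue [Fintype V] [Fintype V'] [DecidableEq V] [DecidableEq V'] :
    ∀ (k : ℕ) (A B : Finset V),
    gameValue (H.comap e) k A B = gameValue H k (A.map (emb e)) (B.map (emb e))
  | 0, A, B => comap_scoreA e H A B
  | (k+1), A, B => by
    have inner : ∀ (a : V),
        {s : ℝ | ∃ b, b ∉ insert a A ∧ b ∉ B ∧
          s = gameValue (H.comap e) k (insert a A) (insert b B)}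
        = {s : ℝ | ∃ b', b' ∉ insert (e a) (A.map (emb e)) ∧ b' ∉ B.map (emb e) ∧
          s = gameValue H k (insert (e a) (A.map (emb e))) (insert b' (B.map (emb e)))} := by
      intro a
      ext s
      constructor
      · rintro ⟨b, hb1, hb2, rfl⟩
        refine ⟨e b, ?_, ?_, ?_⟩
        · intro hc
          rcases Finset.mem_insert.mp hc with h | h
          · exact hb1 (Finset.mem_insert.mpr (Or.inl (e.injective h)))
          · exact hb1 (Finset.mem_insert.mpr (Or.inr ((mem_map_emb e b A).mp h)))
        · rw [mem_map_emb]; exact hb2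
        · rw [comap_gameValue k]; simp [Finset.map_insert]
      · rintro ⟨b', hb1, hb2, rfl⟩
        refine ⟨e.symm b', ?_, ?_, ?_⟩
        · intro hc
          rcases Finset.mem_insert.mp hc with h | h
          · refine hb1 (Finset.mem_insert.mpr (Or.inl ?_))
            rw [← h]; simp
          · exact hb1 (Finset.mem_insert.mpr (Or.inr ((mem_map_emb' e b' A).mpr h)))
        · rw [← mem_map_emb' e b']; exact hb2
        · rw [comap_gameValue k]
          simp [Finset.map_insert]
    rw [gameValue, gameValue]
    congr 1
    ext r
    constructor
    · rintro ⟨a, haA, haB, rfl⟩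
      exact ⟨e a, by rwa [mem_map_emb], by rwa [mem_map_emb], by rw [inner a]⟩
    · rintro ⟨a', ha1, ha2, rfl⟩
      refine ⟨e.symm a', by rwa [← mem_map_emb' e a'], by rwa [← mem_map_emb' e a'], ?_⟩
      rw [inner (e.symm a')]
      simp

end Transport

namespace VorCon

/-! ZMod helper lemmas -/

variable {m : ℕ} [NeZero m]

lemma zsub_val (x : ZMod m) (c : ℕ) (h : c ≤ x.val) : (x - (c : ZMod m)).val = x.val - c := by
  have h1 : x - (c : ZMod m) = (((x.val - c) : ℕ) : ZMod m) := by
    rw [Nat.cast_sub h]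
    congr 1
    have h2 := ZMod.natCast_val (R := ZMod m) x
    rw [ZMod.cast_id] at h2
    exact h2.symm
  rw [h1, ZMod.val_cast_of_lt (by have := ZMod.val_lt x; omega)]

/-- cyclic "directed gap" -/
def dlt (i k : ZMod m) : ℕ := (i - k - 1).val

lemma dlt_lt (i k : ZMod m) : dlt i k < m := ZMod.val_lt _

lemma dlt_inj {i k k' : ZMod m} (h : dlt i k = dlt i k') : k = k' := by
  have : i - k - 1 = i - k' - 1 := ZMod.val_injective _ h
  have h2 : i - k = i - k' := by
    have := congrArg (· + 1) this
    simpa using this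
  have := congrArg (fun z => i - z) h2
  simpa using this

lemma dlt_shift {i k : ZMod m} (s : ℕ) (h : s ≤ dlt i k) :
    dlt (i - (s : ZMod m)) k = dlt i k - s := by
  have : i - (s : ZMod m) - k - 1 = (i - k - 1) - (s : ZMod m) := by ring
  rw [dlt, this, zsub_val _ s h]
  rfl

lemma dlt_eq_self (i k : ZMod m) : k = i - (dlt i k : ZMod m) - 1 := by
  have : ((dlt i k : ℕ) : ZMod m) = i - k - 1 := by
    have := ZMod.natCast_val (R := ZMod m) (i - k - 1)
    rwa [ZMod.cast_id] at this
  rw [this]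
  ring

def cyc (j k : ZMod m) : ℕ := min (j - k).val (k - j).val

lemma cyc_le (i j k : ZMod m) : cyc j k ≤ dlt i j + dlt i k := by
  set α := i - j - 1 with hα
  set β := i - k - 1 with hβ
  have hjk : j - k = β - α := by rw [hα, hβ]; ring
  have hkj : k - j = α - β := by rw [hα, hβ]; ring
  have hcastα : ((α.val : ℕ) : ZMod m) = α := by
    have := ZMod.natCast_val (R := ZMod m) α; rwa [ZMod.cast_id] at this
  have hcastβ : ((β.val : ℕ) : ZMod m) = β := by
    have := ZMod.natCast_val (R := ZMod m) β; rwa [ZMod.cast_id] at this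
  rcases le_total α.val β.val with h | h
  · have : (j - k).val = β.val - α.val := by
      have h2 : β - (α.val : ZMod m) = β - α := by rw [hcastα]
      rw [hjk, ← h2, zsub_val β α.val h]
    have hle : cyc j k ≤ (j - k).val := min_le_left _ _
    rw [this] at hle
    rw [dlt, dlt, ← hα, ← hβ]
    omega
  · have : (k - j).val = α.val - β.val := by
      have h2 : α - (β.val : ZMod m) = α - β := by rw [hcastβ]
      rw [hkj, ← h2, zsub_val α β.val h]
    have hle : cyc j k ≤ (k - j).val := min_le_right _ _
    rw [this] at hle
    rw [dlt, dlt, ← hα, ← hβ]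
    omega

/-! The construction -/

def Cc (m : ℕ) : ℕ := m + 3

/-- length of the path from `x i` to `u j` -/
def Ln (i j : ZMod m) : ℕ := Cc m + dlt i j

lemma Ln_ge (i j : ZMod m) : 4 ≤ Ln i j := by
  have : 1 ≤ m := Nat.one_le_iff_ne_zero.mpr (NeZero.ne m)
  rw [Ln, Cc]; omega

/-- The vertex type: junctions `X i`, mouths `U j`, path interiors `W i j p`
(representing position `p+1` on the path from `X i` to `U j`), leaves `Lf j l`. -/
abbrev VC (m N : ℕ) [NeZero m] : Type :=
  ((ZMod m) ⊕ (ZMod m)) ⊕ ((Σ i : ZMod m, Σ j : ZMod m, Fin (Ln i j - 1)) ⊕ ((ZMod m) × Fin N))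

variable {N : ℕ}

def X (i : ZMod m) : VC m N := Sum.inl (Sum.inl i)
def U (j : ZMod m) : VC m N := Sum.inl (Sum.inr j)
def Wv (i j : ZMod m) (p : Fin (Ln i j - 1)) : VC m N := Sum.inr (Sum.inl ⟨i, j, p⟩)
def Lf (j : ZMod m) (l : Fin N) : VC m N := Sum.inr (Sum.inr (j, l))

/-- one-directional adjacency -/
def Step : VC m N → VC m N → Prop
  | Sum.inl (Sum.inl i), Sum.inr (Sum.inl w) => i = w.1 ∧ (w.2.2 : ℕ) = 0
  | Sum.inr (Sum.inl w), Sum.inr (Sum.inl w') =>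
      w.1 = w'.1 ∧ w.2.1 = w'.2.1 ∧ (w'.2.2 : ℕ) = (w.2.2 : ℕ) + 1
  | Sum.inr (Sum.inl w), Sum.inl (Sum.inr j') => w.2.1 = j' ∧ (w.2.2 : ℕ) = Ln w.1 w.2.1 - 2
  | Sum.inl (Sum.inr j), Sum.inr (Sum.inr kl) => j = kl.1
  | _, _ => False

def GW (m N : ℕ) [NeZero m] : SimpleGraph (VC m N) where
  Adj u v := Step u v ∨ Step v u
  symm := by constructor; intro u v h; tauto
  loopless := by
    constructor
    intro v h
    rcases v with (i | j) | (w | jl) <;> rcases h with h | h <;> simp only [Step] at h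
    · omega
    · omega

/-! Potential functions -/

def phiU (k j : ZMod m) : ℕ := if j = k then 0 else 2 * Cc m + cyc j k

def phi (k : ZMod m) : VC m N → ℕ
  | Sum.inl (Sum.inl i) => Cc m + dlt i k
  | Sum.inl (Sum.inr j) => phiU k j
  | Sum.inr (Sum.inl w) =>
      min (((w.2.2 : ℕ) + 1) + Cc m + dlt w.1 k) ((Ln w.1 w.2.1 - ((w.2.2 : ℕ) + 1)) + phiU k w.2.1)
  | Sum.inr (Sum.inr jl) => phiU k jl.1 + 1

lemma step_lip (k : ZMod m) (u v : VC m N) (h : Step u v) :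
    phi k u ≤ phi k v + 1 ∧ phi k v ≤ phi k u + 1 := by
  rcases u with (i | j) | (w | jl)
  case inl.inl => -- X i
    rcases v with (i' | j') | (w' | jl') <;> simp only [Step] at h
    obtain ⟨iw, jw, q⟩ := w'
    obtain ⟨rfl, hq⟩ := h
    simp only [phi, phiU]
    have hq1 : (q : ℕ) < Ln i jw - 1 := q.isLt
    have hL : Ln i jw = Cc m + dlt i jw := rfl
    have h1 := dlt_lt i k
    have h2 := dlt_lt i jw
    split_ifs with hjk
    · subst hjk; simp only [Cc] at *; omega
    · have h3 := cyc_le i jw k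
      simp only [Cc] at *; omega
  case inl.inr => -- U j
    rcases v with (i' | j') | (w' | jl') <;> simp only [Step] at h
    obtain ⟨j', l'⟩ := jl'
    simp only at h
    subst h
    simp only [phi]
    omega
  case inr.inr => -- Lf
    rcases v with (i' | j') | (w' | jl') <;> simp only [Step] at h
  case inr.inl => -- W w
    rcases v with (i' | j') | (w' | jl') <;> simp only [Step] at h
    -- two surviving cases: v = U j' and v = W w'
    case inl.inr =>
      obtain ⟨iw, jw, p⟩ := w
      obtain ⟨rfl, hp⟩ := h
      simp only [phi, phiU]
      have hp1 : (p : ℕ) < Ln iw jw - 1 := p.isLt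
      have hL : Ln iw jw = Cc m + dlt iw jw := rfl
      have h1 := dlt_lt iw k
      have h2 := dlt_lt iw jw
      split_ifs with hjk
      · subst hjk; simp only [Cc] at *; omega
      · have h3 := cyc_le iw jw k
        simp only [Cc] at *; omega
    case inr.inl =>
      obtain ⟨iw, jw, p⟩ := w
      obtain ⟨iw', jw', q⟩ := w'
      simp only at h
      obtain ⟨h1, h2, hq⟩ := h
      subst h1; subst h2
      simp only [phi, phiU]
      have hq1 : (q : ℕ) < Ln iw jw - 1 := q.isLt
      have hp1 : (p : ℕ) < Ln iw jw - 1 := p.isLt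
      have hL : Ln iw jw = Cc m + dlt iw jw := rfl
      split_ifs with hjk <;> simp only [Cc] at * <;> omega

lemma phi_lip (k : ZMod m) : ∀ u v : VC m N, (GW m N).Adj u v → phi k u ≤ phi k v + 1 := by
  intro u v h
  rcases h with h | h
  · exact (step_lip k u v h).1
  · exact (step_lip k v u h).2

/-! Adjacency facts -/

lemma adjA1 (i j : ZMod m) (h : (0:ℕ) < Ln i j - 1) :
    (GW m N).Adj (X i) (Wv i j ⟨0, h⟩) := Or.inl ⟨rfl, rfl⟩

lemma adjA2 (i j : ZMod m) (p q : ℕ) (hp : p < Ln i j - 1) (hq : q < Ln i j - 1)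
    (hpq : q = p + 1) : (GW m N).Adj (Wv i j ⟨p, hp⟩) (Wv i j ⟨q, hq⟩) :=
  Or.inl ⟨rfl, rfl, hpq⟩

lemma adjA3 (i j : ZMod m) (p : ℕ) (hp : p < Ln i j - 1) (h : p = Ln i j - 2) :
    (GW m N).Adj (Wv i j ⟨p, hp⟩) (U j) := Or.inl ⟨rfl, h⟩

lemma adjA4 (j : ZMod m) (l : Fin N) : (GW m N).Adj (U j) (Lf j l) := Or.inl rfl

/-- the canonical chain from `X i` to `U j` and on to leaf `l` -/
noncomputable def chainf (i j : ZMod m) (l : Fin N) : ℕ → VC m N := fun p =>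
  if hp : p = 0 then X i
  else if h : p < Ln i j then Wv i j ⟨p - 1, by omega⟩
  else if p = Ln i j then U j else Lf j l

lemma chainf_zero (i j : ZMod m) (l : Fin N) : chainf i j l 0 = X i := by
  simp [chainf]

lemma chainf_mid (i j : ZMod m) (l : Fin N) (p : ℕ) (h1 : 1 ≤ p) (h2 : p < Ln i j) :
    chainf i j l p = Wv i j ⟨p - 1, by omega⟩ := by
  rw [chainf, dif_neg (by omega), dif_pos h2]

lemma chainf_L (i j : ZMod m) (l : Fin N) : chainf i j l (Ln i j) = U j := by
  have := Ln_ge i j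
  rw [chainf, dif_neg (by omega), dif_neg (by omega), if_pos rfl]

lemma chainf_top (i j : ZMod m) (l : Fin N) : chainf i j l (Ln i j + 1) = Lf j l := by
  have := Ln_ge i j
  rw [chainf, dif_neg (by omega), dif_neg (by omega), if_neg (by omega)]

lemma chainf_adj (i j : ZMod m) (l : Fin N) :
    ∀ q, q < Ln i j + 1 → (GW m N).Adj (chainf i j l q) (chainf i j l (q + 1)) := by
  intro q hq
  have hL := Ln_ge i j
  rcases Nat.eq_zero_or_pos q with h0 | h0
  · subst h0
    rw [chainf_zero, chainf_mid i j l 1 (le_refl 1) (by omega)]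
    exact adjA1 i j (by omega)
  · rcases Nat.lt_or_ge (q + 1) (Ln i j) with h1 | h1
    · rw [chainf_mid i j l q h0 (by omega), chainf_mid i j l (q+1) (by omega) h1]
      exact adjA2 i j (q-1) (q+1-1) (by omega) (by omega) (by omega)
    · rcases Nat.eq_or_lt_of_le h1 with h2 | h2
      · have h3 : chainf i j l (q + 1) = U j := by
          rw [show q + 1 = Ln i j by omega]
          exact chainf_L i j l
        rw [chainf_mid i j l q h0 (by omega), h3]
        exact adjA3 i j (q-1) (by omega) (by omega)
      · have hq2 : q = Ln i j := by omega
        subst hq2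
        rw [chainf_L, chainf_top]
        exact adjA4 j l


/-! Distance bounds in the construction -/

lemma chainf_adj' (i j : ZMod m) (l : Fin N) (L : ℕ) (hL : L ≤ Ln i j + 1) :
    ∀ q, q < L → (GW m N).Adj (chainf i j l q) (chainf i j l (q + 1)) :=
  fun q hq => chainf_adj i j l q (by omega)

lemma dist_X_Lf (i k : ZMod m) (l : Fin N) :
    (GW m N).dist (X i) (Lf k l) ≤ Ln i k + 1 := by
  have h := dist_le_chain (GW m N) (chainf i k l) (Ln i k + 1)
    (chainf_adj' i k l (Ln i k + 1) (le_refl _))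
  rwa [chainf_zero, chainf_top] at h

lemma reach_X_U (i j : ZMod m) (l : Fin N) : (GW m N).Reachable (X i) (U j) := by
  have h := reachable_chain (GW m N) (chainf i j l) (Ln i j)
    (chainf_adj' i j l (Ln i j) (by omega))
  rwa [chainf_zero, chainf_L] at h

lemma reach_X_W (i j : ZMod m) (p : Fin (Ln i j - 1)) (l : Fin N) :
    (GW m N).Reachable (X i) (Wv i j p) := by
  have hp := p.isLt
  have h := reachable_chain (GW m N) (chainf i j l) ((p : ℕ) + 1)
    (chainf_adj' i j l ((p : ℕ) + 1) (by omega))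
  rw [chainf_zero, chainf_mid i j l ((p : ℕ) + 1) (by omega) (by omega)] at h
  have hfin : (⟨(p : ℕ) + 1 - 1, by omega⟩ : Fin (Ln i j - 1)) = p := by
    apply Fin.ext; simp
  rwa [hfin] at h

lemma reach_X_Lf (i k : ZMod m) (l : Fin N) : (GW m N).Reachable (X i) (Lf k l) := by
  have h := reachable_chain (GW m N) (chainf i k l) (Ln i k + 1)
    (chainf_adj' i k l (Ln i k + 1) (le_refl _))
  rwa [chainf_zero, chainf_top] at h

lemma connected_GW (l0 : Fin N) : (GW m N).Connected := by
  rw [connected_iff]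
  have key : ∀ v : VC m N, (GW m N).Reachable (X 0) v := by
    intro v
    rcases v with (i | j) | (w | jl)
    · exact ((reach_X_U 0 0 l0).trans (reach_X_U i 0 l0).symm : _)
    · exact reach_X_U 0 j l0
    · obtain ⟨i, j, p⟩ := w
      exact ((reach_X_U 0 0 l0).trans (reach_X_U i 0 l0).symm).trans (reach_X_W i j p l0)
    · obtain ⟨j, l⟩ := jl
      exact reach_X_Lf 0 j l
  exact ⟨fun u v => (key u).symm.trans (key v), ⟨X 0⟩⟩

/-! The response move and its domination properties -/

def iota : VC m N → ZMod m
  | Sum.inl (Sum.inl i) => i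
  | Sum.inl (Sum.inr j) => j
  | Sum.inr (Sum.inl w) => w.1
  | Sum.inr (Sum.inr jl) => jl.1

def kap : VC m N → ZMod m
  | Sum.inl (Sum.inl i) => i
  | Sum.inl (Sum.inr j) => j
  | Sum.inr (Sum.inl w) => w.2.1
  | Sum.inr (Sum.inr jl) => jl.1

def bmove (a : VC m N) (s : ℕ) : VC m N := X (iota a - (s : ZMod m))

def Exc (a : VC m N) (s : ℕ) : Finset (ZMod m) :=
  Finset.univ.filter (fun k => dlt (iota a) k ≤ s + 2 ∨ k = kap a)

lemma Exc_card (a : VC m N) (s : ℕ) : (Exc a s).card ≤ s + 4 := by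
  have hsub : Exc a s ⊆ insert (kap a)
      ((Finset.range (s + 3)).image (fun d : ℕ => iota a - (d : ZMod m) - 1)) := by
    intro k hk
    rw [Exc, Finset.mem_filter] at hk
    rcases hk.2 with h | h
    · refine Finset.mem_insert.mpr (Or.inr ?_)
      refine Finset.mem_image.mpr ⟨dlt (iota a) k, Finset.mem_range.mpr (by omega), ?_⟩
      exact (dlt_eq_self (iota a) k).symm
    · exact Finset.mem_insert.mpr (Or.inl h)
  calc (Exc a s).card ≤ _ := Finset.card_le_card hsub
    _ ≤ ((Finset.range (s + 3)).image (fun d : ℕ => iota a - (d : ZMod m) - 1)).card + 1 :=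
        Finset.card_insert_le _ _
    _ ≤ (s + 3) + 1 := by
        have := Finset.card_image_le (s := Finset.range (s + 3))
          (f := fun d : ℕ => iota a - (d : ZMod m) - 1)
        simp only [Finset.card_range] at this
        omega

lemma phi_Lf_self (k : ZMod m) (l : Fin N) : phi k (Lf k l) = 1 := by
  simp [phi, Lf, phiU]

lemma dist_lower (l0 : Fin N) (a : VC m N) (k : ZMod m) (l : Fin N) :
    phi k a ≤ 1 + (GW m N).dist a (Lf k l) := by
  have hreach : (GW m N).Reachable a (Lf k l) :=
    ((connected_GW l0).preconnected a (Lf k l))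
  have h := dist_ge_lipschitz (GW m N) (phi k) (phi_lip k) a (Lf k l) hreach
  rw [phi_Lf_self] at h
  omega

lemma beats (a : VC m N) (s : ℕ) (hs : 3 ≤ s) (k : ZMod m)
    (hk : k ∉ Exc a s) (l l0 : Fin N) :
    (GW m N).dist (bmove a s) (Lf k l) < (GW m N).dist a (Lf k l) := by
  rw [Exc, Finset.mem_filter] at hk
  push_neg at hk
  obtain ⟨hdl, hkap⟩ := hk (Finset.mem_univ k)
  have hdl' : s + 3 ≤ dlt (iota a) k := by omega
  have hshift : dlt (iota a - (s : ZMod m)) k = dlt (iota a) k - s :=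
    dlt_shift s (by omega)
  have hupper : (GW m N).dist (bmove a s) (Lf k l) ≤ Cc m + (dlt (iota a) k - s) + 1 := by
    have := dist_X_Lf (iota a - (s : ZMod m)) k l
    rw [Ln, hshift] at this
    exact this
  have hlower := dist_lower l0 a k l
  have hdltlt := dlt_lt (iota a) k
  rcases a with (i | j) | (w | jl)
  · -- a = X i
    simp only [iota] at *
    simp only [phi] at hlower
    simp only [Cc] at *
    omega
  · -- a = U j
    simp only [iota, kap] at *
    have hjk : ¬ (j = k) := fun h => hkap h.symm
    simp only [phi, phiU, if_neg hjk] at hlower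
    simp only [Cc] at *
    omega
  · -- a = W w
    simp only [iota, kap] at *
    have hjk : ¬ (w.2.1 = k) := fun h => hkap h.symm
    simp only [phi, phiU, if_neg hjk] at hlower
    have hp := w.2.2.isLt
    have hL : Ln w.1 w.2.1 = Cc m + dlt w.1 w.2.1 := rfl
    simp only [Cc] at *
    omega
  · -- a = Lf
    simp only [iota, kap] at *
    have hjk : ¬ (jl.1 = k) := fun h => hkap h.symm
    simp only [phi, phiU, if_neg hjk] at hlower
    simp only [Cc] at *
    omega


/-! Strategy invariant -/

section Strategy
variable {m N : ℕ} [NeZero m]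

lemma X_inj {i i' : ZMod m} (h : (X i : VC m N) = X i') : i = i' := by
  simpa [X] using h

def Pinv (t : ℕ) (k : ℕ) (A B : Finset (VC m N)) : Prop :=
  A.card = B.card ∧ A.card + k = t ∧
  ∃ f : VC m N → ℕ, ∀ a ∈ A, (3 ≤ f a ∧ f a ≤ 2*t+3 ∧ bmove a (f a) ∈ B)

lemma bmove_inj {t : ℕ} (hm2 : 2*t+3 < m) (a : VC m N) :
    Set.InjOn (fun s => bmove a s) (Finset.Icc 3 (2*t+3)) := by
  intro s1 hs1 s2 hs2 h
  simp only [Finset.coe_Icc, Set.mem_Icc] at hs1 hs2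
  have h2 : iota a - (s1 : ZMod m) = iota a - (s2 : ZMod m) := X_inj h
  have h3 : (s1 : ZMod m) = (s2 : ZMod m) := by
    have := congrArg (fun z => iota a - z) h2
    simpa using this
  have h4 := (ZMod.natCast_eq_natCast_iff' s1 s2 m).mp h3
  rw [Nat.mod_eq_of_lt (by omega), Nat.mod_eq_of_lt (by omega)] at h4
  exact h4

lemma exists_smove {t : ℕ} (hm2 : 2*t+3 < m) (a : VC m N) (T : Finset (VC m N))
    (hT : T.card ≤ 2*t) : ∃ s, 3 ≤ s ∧ s ≤ 2*t+3 ∧ bmove a s ∉ T := by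
  by_contra hcon
  push_neg at hcon
  have hsub : (Finset.Icc 3 (2*t+3)).image (fun s => bmove a s) ⊆ T := by
    intro b hb
    obtain ⟨s, hs, rfl⟩ := Finset.mem_image.mp hb
    rw [Finset.mem_Icc] at hs
    exact hcon s hs.1 hs.2
  have hcard : ((Finset.Icc 3 (2*t+3)).image (fun s => bmove a s)).card = 2*t+1 := by
    rw [Finset.card_image_of_injOn (bmove_inj hm2 a), Nat.card_Icc]
    omega
  have := Finset.card_le_card hsub
  omega

lemma Pinv_step {t : ℕ} (hm2 : 2*t+3 < m) (k : ℕ) (A B : Finset (VC m N))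
    (hP : Pinv t (k+1) A B) (a : VC m N) (ha1 : a ∉ A) (ha2 : a ∉ B) :
    ∃ b, b ∉ insert a A ∧ b ∉ B ∧ Pinv t k (insert a A) (insert b B) := by
  obtain ⟨hcard, hsum, f, hf⟩ := hP
  obtain ⟨s, hs3, hs2t, hsfree⟩ := exists_smove hm2 a ((insert a A) ∪ B) (by
    have h1 : ((insert a A) ∪ B).card ≤ (insert a A).card + B.card := Finset.card_union_le _ _
    have h2 : (insert a A).card = A.card + 1 := Finset.card_insert_of_notMem ha1
    omega)
  rw [Finset.mem_union] at hsfree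
  push_neg at hsfree
  refine ⟨bmove a s, hsfree.1, hsfree.2, ?_, ?_, ?_⟩
  · rw [Finset.card_insert_of_notMem ha1, Finset.card_insert_of_notMem hsfree.2, hcard]
  · rw [Finset.card_insert_of_notMem ha1]
    omega
  · refine ⟨Function.update f a s, ?_⟩
    intro a' ha'
    rcases Finset.mem_insert.mp ha' with rfl | ha'
    · rw [Function.update_self]
      exact ⟨hs3, hs2t, Finset.mem_insert_self _ _⟩
    · have hne : a' ≠ a := fun h => ha1 (h ▸ ha')
      rw [Function.update_of_ne hne]
      obtain ⟨h1, h2, h3⟩ := hf a' ha'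
      exact ⟨h1, h2, Finset.mem_insert_of_mem h3⟩

lemma Lf_injOn : Set.InjOn (fun kl : ZMod m × Fin N => (Lf kl.1 kl.2 : VC m N)) Set.univ := by
  intro kl _ kl' _ h
  simp only [Lf, Sum.inr.injEq, Prod.mk.injEq] at h
  exact Prod.ext h.1 h.2

lemma Pinv_base {t : ℕ} (ht : 1 ≤ t) (l0 : Fin N) (A B : Finset (VC m N))
    (hP : Pinv t 0 A B) :
    scoreA (GW m N) A B ≤ (Fintype.card (VC m N) : ℝ) - (((m - t*(2*t+7)) * N : ℕ) : ℝ) := by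
  classical
  obtain ⟨hcard, hsum, f, hf⟩ := hP
  set ExcAll : Finset (ZMod m) := A.biUnion (fun a => Exc a (f a)) with hEA
  set Good : Finset (VC m N) :=
    ((Finset.univ \ ExcAll) ×ˢ (Finset.univ : Finset (Fin N))).image
      (fun kl : ZMod m × Fin N => Lf kl.1 kl.2) with hG
  have hANe : A.Nonempty := Finset.card_pos.mp (by omega)
  have hGood : ∀ v ∈ Good, distToSet (GW m N) B v < distToSet (GW m N) A v := by
    intro v hv
    obtain ⟨kl, hkl, rfl⟩ := Finset.mem_image.mp hv
    rw [Finset.mem_product, Finset.mem_sdiff] at hkl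
    apply distToSet_lt (GW m N) A B _ hANe
    intro a ha
    obtain ⟨h3, h2t, hbB⟩ := hf a ha
    refine ⟨bmove a (f a), hbB, ?_⟩
    apply beats a (f a) h3 kl.1 ?_ kl.2 l0
    intro hmem
    exact hkl.1.2 (Finset.mem_biUnion.mpr ⟨a, ha, hmem⟩)
  have hle := scoreA_le_compl (GW m N) A B Good hGood
  refine le_trans hle ?_
  have hGcard : Good.card = (Finset.univ \ ExcAll).card * N := by
    rw [hG, Finset.card_image_of_injOn (Set.InjOn.mono (Set.subset_univ _) Lf_injOn),
      Finset.card_product]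
    simp
  have hExcCard : ExcAll.card ≤ t * (2*t+7) := by
    calc ExcAll.card ≤ ∑ a ∈ A, (Exc a (f a)).card := Finset.card_biUnion_le
      _ ≤ ∑ a ∈ A, (2*t+7) := by
          apply Finset.sum_le_sum
          intro a ha
          have h1 := Exc_card a (f a)
          have h2 := (hf a ha).2.1
          omega
      _ = t * (2*t+7) := by
          rw [Finset.sum_const, smul_eq_mul]
          have hA : A.card = t := by omega
          rw [hA]
  have hcard2 : (m - t*(2*t+7)) * N ≤ Good.card := by
    rw [hGcard]
    apply Nat.mul_le_mul_right
    have h1 : (Finset.univ \ ExcAll).card = m - ExcAll.card := by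
      rw [Finset.card_sdiff_of_subset (Finset.subset_univ _), Finset.card_univ, ZMod.card]
    omega
  have := (Nat.cast_le (α := ℝ)).mpr hcard2
  linarith

end Strategy

lemma card_VC {m N : ℕ} [NeZero m] :
    Fintype.card (VC m N) =
      (2 * m + Fintype.card (Σ i : ZMod m, Σ j : ZMod m, Fin (Ln i j - 1))) + m * N := by
  simp only [Fintype.card_sum, Fintype.card_prod, Fintype.card_fin, ZMod.card]
  ring

lemma gameValue_GW_le {m N : ℕ} [NeZero m] (t : ℕ) (ht : 1 ≤ t) (hm2 : 2*t+3 < m)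
    (hN : 1 ≤ N) :
    gameValue (GW m N) t ∅ ∅ ≤
      (Fintype.card (VC m N) : ℝ) - (((m - t*(2*t+7)) * N : ℕ) : ℝ) := by
  have l0 : Fin N := ⟨0, hN⟩
  have hM : (0:ℝ) ≤ (Fintype.card (VC m N) : ℝ) - (((m - t*(2*t+7)) * N : ℕ) : ℝ) := by
    have h1 : (m - t*(2*t+7)) * N ≤ Fintype.card (VC m N) := by
      rw [card_VC]
      have : (m - t*(2*t+7)) * N ≤ m * N := Nat.mul_le_mul_right _ (Nat.sub_le _ _)
      omega
    have := (Nat.cast_le (α := ℝ)).mpr h1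
    linarith
  apply gameValue_le_of_strategy (GW m N) _ hM (Pinv t)
    (fun A B hP => Pinv_base ht l0 A B hP)
    (fun k A B hP a ha1 ha2 => Pinv_step hm2 k A B hP a ha1 ha2)
    t ∅ ∅
  exact ⟨rfl, by simpa using rfl, fun _ => 3, by simp⟩

end VorCon

open VorCon in
/-- For every real `ε > 0` and every integer `t ≥ 1`, there exists a finite
connected graph `G` with `2t ≤ |V(G)|` such that `VR(G, t) < ε`. -/
theorem voronoi_ratio_arbitrarily_small (ε : ℝ) (hε : 0 < ε) (t : ℕ) (ht : 1 ≤ t) :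
    ∃ (n : ℕ) (G : SimpleGraph (Fin n)), G.Connected ∧ 2 * t ≤ n ∧ VR G t < ε := by
  classical
  set Q : ℕ := t * (2*t+7) with hQdef
  set m : ℕ := 2*t + 10 + Q + ⌈((Q:ℝ)+1)/ε⌉₊ with hmdef
  haveI : NeZero m := ⟨by omega⟩
  set S : ℕ := Fintype.card (Σ i : ZMod m, Σ j : ZMod m, Fin (Ln i j - 1)) with hSdef
  set F : ℕ := 2 * m + S with hFdef
  set N : ℕ := F + 1 with hNdef
  have hN1 : 1 ≤ N := by omega
  set n' : ℕ := Fintype.card (VC m N) with hn'def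
  have hcard : n' = F + m * N := card_VC
  set e : Fin n' ≃ VC m N := (Fintype.equivFin (VC m N)).symm with hedef
  refine ⟨n', SimpleGraph.comap (⇑e) (GW m N), ?_, ?_, ?_⟩
  · exact comap_connected e _ (connected_GW ⟨0, by omega⟩)
  · omega
  · have hQm : Q ≤ m := by omega
    have hεm : (Q : ℝ) + 1 ≤ ε * m := by
      have h1 : ((Q:ℝ)+1)/ε ≤ (⌈((Q:ℝ)+1)/ε⌉₊ : ℝ) := Nat.le_ceil _
      have h2 : (⌈((Q:ℝ)+1)/ε⌉₊ : ℝ) ≤ (m : ℝ) := by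
        have : ⌈((Q:ℝ)+1)/ε⌉₊ ≤ m := by omega
        exact_mod_cast this
      have h3 : ((Q:ℝ)+1)/ε ≤ (m:ℝ) := le_trans h1 h2
      calc (Q : ℝ) + 1 = (((Q:ℝ)+1)/ε) * ε := by field_simp
        _ ≤ (m:ℝ) * ε := mul_le_mul_of_nonneg_right h3 (le_of_lt hε)
        _ = ε * m := by ring
    have hgv := gameValue_GW_le (m := m) (N := N) t ht (by omega) hN1
    rw [VR, comap_gameValue e (GW m N) t ∅ ∅, Fintype.card_fin]
    simp only [Finset.map_empty]
    rw [div_lt_iff₀ (by positivity : (0:ℝ) < (n' : ℝ))]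
    have hcastsub : (((m - Q) * N : ℕ) : ℝ) = (m:ℝ) * N - (Q:ℝ) * N := by
      rw [Nat.cast_mul, Nat.cast_sub hQm]
      ring
    have hupper : gameValue (GW m N) t ∅ ∅ ≤ (F : ℝ) + (Q:ℝ) * N := by
      rw [hQdef] at hcastsub ⊢
      rw [hcastsub] at hgv
      have hcn : (n' : ℝ) = (F:ℝ) + (m:ℝ) * N := by exact_mod_cast hcard
      rw [hn'def] at hcn
      linarith
    have hEn : ε * (n' : ℝ) = ε * F + ε * ((m:ℝ) * N) := by
      have hcn : (n' : ℝ) = (F:ℝ) + (m:ℝ) * N := by exact_mod_cast hcard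
      rw [hcn]; ring
    have hprod : ((Q:ℝ) + 1) * N ≤ (ε * m) * N :=
      mul_le_mul_of_nonneg_right hεm (by positivity)
    have hFN : (N : ℝ) = (F : ℝ) + 1 := by exact_mod_cast hNdef
    have hεF : 0 ≤ ε * F := by positivity
    nlinarith [hupper, hEn, hprod, hFN, hεF]
end

section
/- For every integer t₀ ≥ 1 and every real ε > 0, there exists a finite connected graph G with 2t₀ ≤ |V(G)| such that player B has a single strategy in the t₀-round discrete Voronoi game on G with the following property: for every k = 1, …, t₀, after both players have placed their k-th pebbles, if the unclaimed vertices were divided according to the Voronoi rule at that moment, B's score would be at least (1 − ε)·|V(G)|. -/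
set_option linter.unusedSectionVars false

open SimpleGraph

variable {V : Type*}

/-- The history of the game after A's `(k+1)`-st move, when A plays the sequence `a`
and B plays according to the strategy `σ` (which maps a history, a list of all moves
made so far with A moving first, to B's next move). -/
def histList (σ : List V → V) (a : ℕ → V) : ℕ → List V
  | 0 => [a 0]
  | (k + 1) => histList σ a k ++ [σ (histList σ a k), a (k + 1)]

/-- B's `(k+1)`-st move when following strategy `σ` against A's sequence of moves `a`. -/
def bMove (σ : List V → V) (a : ℕ → V) (k : ℕ) : V :=
  σ (histList σ a k)

namespace VorB

/-- vertex type: centers ⊕ spoke-vertices ⊕ (hub/leaf mass vertices) -/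
abbrev Wt (K : ℕ) : Type := ZMod K ⊕ ((ZMod K × ZMod K × Fin (10*K)) ⊕ (ZMod K × Option (Fin (10*K^4))))

variable (K : ℕ)

def cen (t : ZMod K) : Wt K := Sum.inl t
def spk (t g : ZMod K) (s : Fin (10*K)) : Wt K := Sum.inr (Sum.inl (t,g,s))
def mas (g : ZMod K) (o : Option (Fin (10*K^4))) : Wt K := Sum.inr (Sum.inr (g,o))

def lev (t g : ZMod K) : ℕ := 5*K + 5*((g - t).val)
def att (t g : ZMod K) : ℕ := lev K t g - 2

inductive Edg : Wt K → Wt K → Prop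
  | cs (t g : ZMod K) (h : 0 < 10*K) : Edg (cen K t) (spk K t g ⟨0, h⟩)
  | ss (t g : ZMod K) (s : ℕ) (h : s+1 < 10*K) :
      Edg (spk K t g ⟨s, Nat.lt_of_succ_lt h⟩) (spk K t g ⟨s+1, h⟩)
  | sh (t g : ZMod K) (h : att K t g < 10*K) : Edg (spk K t g ⟨att K t g, h⟩) (mas K g none)
  | hl (g : ZMod K) (z : Fin (10*K^4)) : Edg (mas K g none) (mas K g (some z))

def Gw : SimpleGraph (Wt K) := SimpleGraph.fromRel (Edg K)

def baseIdx : Wt K → ZMod K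
  | Sum.inl t => t
  | Sum.inr (Sum.inl (t,_,_)) => t
  | Sum.inr (Sum.inr (g,_)) => g

def hubIdx : Wt K → Option (ZMod K)
  | Sum.inl _ => none
  | Sum.inr (Sum.inl (_,g,_)) => some g
  | Sum.inr (Sum.inr (g,_)) => some g

def hv (g h : ZMod K) : ℕ := if h = g then 0 else 10*K

def pot (g : ZMod K) : Wt K → ℕ
  | Sum.inl t => lev K t g
  | Sum.inr (Sum.inl (t,h,s)) =>
      min (s.val + 1 + lev K t g)
        (((s.val - att K t h) + (att K t h - s.val)) + 1 + hv K g h)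
  | Sum.inr (Sum.inr (h,o)) => hv K g h + (if o = none then 0 else 1)

variable [NeZero K]

lemma Kpos : 0 < K := Nat.pos_of_ne_zero (NeZero.ne K)

lemma lev_lb (t g : ZMod K) : 5*K ≤ lev K t g := Nat.le_add_right _ _

lemma lev_ub (t g : ZMod K) : lev K t g ≤ 10*K - 5 := by
  have := ZMod.val_lt (g - t)
  unfold lev; omega

lemma att_lt (t g : ZMod K) : att K t g < 10*K := by
  have h1 := lev_ub K t g
  have h2 := lev_lb K t g
  have := Kpos K
  unfold att; omega

lemma edg_pot {u v : Wt K} (g : ZMod K) (h : Edg K u v) :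
    pot K g u ≤ pot K g v + 1 ∧ pot K g v ≤ pot K g u + 1 := by
  have hKp := Kpos K
  cases h with
  | cs t g' h0 =>
    have h1 := lev_ub K t g
    have h2 := lev_lb K t g
    have h3 := lev_ub K t g'
    have h4 := lev_lb K t g'
    have hatt : att K t g' = lev K t g' - 2 := rfl
    by_cases hgg : g' = g
    · subst hgg
      simp only [pot, cen, spk, hv, if_pos rfl]
      omega
    · simp only [pot, cen, spk, hv, if_neg hgg]
      omega
  | ss t g' s h =>
    simp only [pot, spk]
    omega
  | sh t g' h =>
    have h1 := lev_ub K t g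
    have h2 := lev_lb K t g
    have h3 := lev_ub K t g'
    have h4 := lev_lb K t g'
    have hatt : att K t g' = lev K t g' - 2 := rfl
    by_cases hgg : g' = g
    · subst hgg
      simp only [pot, spk, mas, hv, if_pos rfl, Nat.sub_self, reduceIte]
      omega
    · simp only [pot, spk, mas, hv, if_neg hgg, Nat.sub_self, reduceIte]
      omega
  | hl g' z =>
    by_cases hgg : g' = g
    · subst hgg
      simp only [pot, mas, hv, if_pos rfl, reduceIte, reduceCtorEq]
      omega
    · simp only [pot, mas, hv, if_neg hgg, reduceIte, reduceCtorEq]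
      omega

lemma pot_lip {u v : Wt K} (g : ZMod K) (h : (Gw K).Adj u v) :
    pot K g u ≤ pot K g v + 1 := by
  rw [Gw, SimpleGraph.fromRel_adj] at h
  rcases h.2 with h' | h'
  · exact (edg_pot K g h').1
  · exact (edg_pot K g h').2

lemma pot_le_walk (g : ZMod K) {u v : Wt K} (w : (Gw K).Walk u v) :
    pot K g u ≤ pot K g v + w.length := by
  induction w with
  | nil => simp
  | cons h p ih =>
    have := pot_lip K g h
    simp only [SimpleGraph.Walk.length_cons]
    omega

lemma adj_cs (t g : ZMod K) (h : 0 < 10*K) : (Gw K).Adj (cen K t) (spk K t g ⟨0, h⟩) := by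
  rw [Gw, SimpleGraph.fromRel_adj]
  exact ⟨by simp [cen, spk], Or.inl (Edg.cs t g h)⟩

lemma adj_ss (t g : ZMod K) (s : ℕ) (h : s+1 < 10*K) :
    (Gw K).Adj (spk K t g ⟨s, Nat.lt_of_succ_lt h⟩) (spk K t g ⟨s+1, h⟩) := by
  rw [Gw, SimpleGraph.fromRel_adj]
  exact ⟨by simp [spk], Or.inl (Edg.ss t g s h)⟩

lemma adj_sh (t g : ZMod K) (h : att K t g < 10*K) :
    (Gw K).Adj (spk K t g ⟨att K t g, h⟩) (mas K g none) := by
  rw [Gw, SimpleGraph.fromRel_adj]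
  exact ⟨by simp [spk, mas], Or.inl (Edg.sh t g h)⟩

lemma adj_hl (g : ZMod K) (z : Fin (10*K^4)) :
    (Gw K).Adj (mas K g none) (mas K g (some z)) := by
  rw [Gw, SimpleGraph.fromRel_adj]
  exact ⟨by simp [mas], Or.inl (Edg.hl g z)⟩

lemma exists_spoke_walk (t g : ZMod K) :
    ∀ (s : ℕ) (hs : s < 10*K), ∃ w : (Gw K).Walk (cen K t) (spk K t g ⟨s, hs⟩), w.length = s + 1 := by
  intro s
  induction s with
  | zero => exact fun hs => ⟨SimpleGraph.Walk.cons (adj_cs K t g hs) SimpleGraph.Walk.nil, rfl⟩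
  | succ m ih =>
    intro hs
    obtain ⟨w, hw⟩ := ih (Nat.lt_of_succ_lt hs)
    exact ⟨w.concat (adj_ss K t g m hs), by simp [SimpleGraph.Walk.length_concat, hw]⟩

lemma exists_hub_walk (t g : ZMod K) :
    ∃ w : (Gw K).Walk (cen K t) (mas K g none), w.length = lev K t g := by
  obtain ⟨w, hw⟩ := exists_spoke_walk K t g (att K t g) (att_lt K t g)
  refine ⟨w.concat (adj_sh K t g (att_lt K t g)), ?_⟩
  have h2 := lev_lb K t g
  have hKp := Kpos K
  have hatt : att K t g = lev K t g - 2 := rfl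
  simp [SimpleGraph.Walk.length_concat, hw]
  omega

lemma dist_cen_mas_le (t g : ZMod K) (o : Option (Fin (10*K^4))) :
    (Gw K).dist (cen K t) (mas K g o) ≤ lev K t g + (if o = none then 0 else 1) := by
  obtain ⟨w, hw⟩ := exists_hub_walk K t g
  cases o with
  | none => simpa [hw] using SimpleGraph.dist_le w
  | some z =>
    have := SimpleGraph.dist_le (w.concat (adj_hl K g z))
    simpa [SimpleGraph.Walk.length_concat, hw] using this

lemma reach_to_hub0 (u : Wt K) : (Gw K).Reachable u (mas K 0 none) := by
  have hcm : ∀ t g : ZMod K, (Gw K).Reachable (cen K t) (mas K g none) := by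
    intro t g
    obtain ⟨w, -⟩ := exists_hub_walk K t g
    exact ⟨w⟩
  rcases u with t | ⟨⟨t, g, s⟩⟩ | ⟨⟨g, o⟩⟩
  · exact hcm t 0
  · have h1 : (Gw K).Reachable (cen K t) (spk K t g s) := by
      obtain ⟨w, -⟩ := exists_spoke_walk K t g s.val s.isLt
      exact ⟨w.copy rfl (by simp [spk])⟩
    exact h1.symm.trans (hcm t 0)
  · cases o with
    | none => exact ((hcm 0 g).symm.trans (hcm 0 0))
    | some z => exact (adj_hl K g z).symm.reachable.trans ((hcm 0 g).symm.trans (hcm 0 0))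

lemma conn : (Gw K).Connected := by
  rw [SimpleGraph.connected_iff]
  refine ⟨fun u v => (reach_to_hub0 K u).trans (reach_to_hub0 K v).symm, ⟨cen K 0⟩⟩

lemma pot_le_dist (g : ZMod K) (u : Wt K) : pot K g u ≤ (Gw K).dist u (mas K g none) := by
  obtain ⟨w, hw⟩ := ((conn K) u (mas K g none)).exists_walk_length_eq_dist
  have := pot_le_walk K g w
  have h0 : pot K g (mas K g none) = 0 := by simp [pot, mas, hv]
  omega

lemma adj_leaf {u : Wt K} {g : ZMod K} {z : Fin (10*K^4)}
    (h : (Gw K).Adj u (mas K g (some z))) : u = mas K g none := by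
  rw [Gw, SimpleGraph.fromRel_adj] at h
  rcases h.2 with h' | h'
  · cases h'; rfl
  · cases h'

lemma pot_le_dist_leaf (g : ZMod K) (z : Fin (10*K^4)) (u : Wt K) (hu : u ≠ mas K g (some z)) :
    pot K g u + 1 ≤ (Gw K).dist u (mas K g (some z)) := by
  set f : Wt K → ℕ := fun w => if w = mas K g (some z) then 0 else pot K g w + 1 with hf
  have hlip : ∀ {x y : Wt K}, (Gw K).Adj x y → f x ≤ f y + 1 := by
    intro x y hxy
    by_cases hx : x = mas K g (some z)
    · simp [hf, hx]
    · by_cases hy : y = mas K g (some z)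
      · subst hy
        have := adj_leaf K hxy
        subst this
        simp [hf, pot, mas, hv, reduceCtorEq]
      · have := pot_lip K g hxy
        simp only [hf, if_neg hx, if_neg hy]
        omega
  have hwalk : ∀ {x y : Wt K} (w : (Gw K).Walk x y), f x ≤ f y + w.length := by
    intro x y w
    induction w with
    | nil => simp
    | cons h p ih =>
      have := hlip h
      simp only [SimpleGraph.Walk.length_cons]
      omega
  obtain ⟨w, hw⟩ := ((conn K) u (mas K g (some z))).exists_walk_length_eq_dist
  have := hwalk w
  simp only [hf, if_neg hu, if_pos rfl] at this
  omega

lemma pot_le_dist_mas (g : ZMod K) (o : Option (Fin (10*K^4))) (u : Wt K)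
    (hu : u ≠ mas K g o) :
    pot K g u + (if o = none then 0 else 1) ≤ (Gw K).dist u (mas K g o) := by
  cases o with
  | none => simpa using pot_le_dist K g u
  | some z => simpa using pot_le_dist_leaf K g z u hu

/-- The key one-round domination lemma. -/
lemma key (a : Wt K) (g : ZMod K) (d : ℕ) (hd1 : 1 ≤ d)
    (hd2 : d ≤ (g - baseIdx K a).val) (hg : hubIdx K a ≠ some g)
    (o : Option (Fin (10*K^4))) :
    (Gw K).dist (cen K (baseIdx K a + (d : ZMod K))) (mas K g o) + 1 ≤
      (Gw K).dist a (mas K g o) := by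
  have hKp := Kpos K
  set t := baseIdx K a with ht
  have hu : (g - t).val < K := ZMod.val_lt _
  have hdK : d < K := lt_of_le_of_lt hd2 hu
  have hsub : (g - (t + (d : ZMod K))) = (g - t) - (d : ZMod K) := by ring
  have hval : ((g - t) - (d : ZMod K)).val = (g - t).val - d := by
    rw [ZMod.val_sub (by rw [ZMod.val_cast_of_lt hdK]; exact hd2), ZMod.val_cast_of_lt hdK]
  have hlev : lev K (t + (d : ZMod K)) g = 5*K + 5*((g - t).val - d) := by
    rw [lev, hsub, hval]
  -- middle inequality : pot g a ≥ lev (t+d) g + 1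
  have hmid : lev K (t + (d : ZMod K)) g + 1 ≤ pot K g a := by
    rw [hlev]
    rcases a with t' | ⟨⟨t', h', s⟩⟩ | ⟨⟨h', o'⟩⟩
    · -- center
      have hb : t = t' := rfl
      have : lev K t' g = 5*K + 5*((g - t).val) := by rw [← hb]; rfl
      simp only [pot]
      omega
    · -- spoke
      have hb : t = t' := rfl
      have hne : h' ≠ g := by simpa [hubIdx] using hg
      have : lev K t' g = 5*K + 5*((g - t).val) := by rw [← hb]; rfl
      simp only [pot, hv, if_neg hne]
      omega
    · -- mass
      have hne : h' ≠ g := by simpa [hubIdx] using hg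
      simp only [pot, hv, if_neg hne]
      omega
  have hup := dist_cen_mas_le K (t + (d : ZMod K)) g o
  have hne : a ≠ mas K g o := by
    intro h
    subst h
    exact hg (by simp [hubIdx, mas])
  have hlow := pot_le_dist_mas K g o a hne
  rcases o with - | z
  · simp only [reduceIte] at hup hlow
    omega
  · simp only [reduceCtorEq, reduceIte] at hup hlow
    omega

/-- distances are preserved by graph isomorphisms -/
lemma iso_dist {V V' : Type*} {G : SimpleGraph V} {G' : SimpleGraph V'} (φ : G ≃g G')
    (u v : V) : G'.dist (φ u) (φ v) = G.dist u v := by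
  by_cases h : G.Reachable u v
  · apply le_antisymm
    · obtain ⟨p, hp⟩ := h.exists_walk_length_eq_dist
      calc G'.dist (φ u) (φ v) ≤ (p.map φ.toHom).length := SimpleGraph.dist_le _
        _ = G.dist u v := by rw [SimpleGraph.Walk.length_map, hp]
    · have h' : G'.Reachable (φ u) (φ v) := SimpleGraph.Iso.reachable_iff.mpr h
      obtain ⟨p, hp⟩ := h'.exists_walk_length_eq_dist
      have := SimpleGraph.dist_le ((p.map φ.symm.toHom).copy (φ.toEquiv.symm_apply_apply u) (φ.toEquiv.symm_apply_apply v))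
      erw [SimpleGraph.Walk.length_copy, SimpleGraph.Walk.length_map, hp] at this
      exact this
  · have h' : ¬ G'.Reachable (φ u) (φ v) := fun hr => h (SimpleGraph.Iso.reachable_iff.mp hr)
    rw [SimpleGraph.dist_eq_zero_of_not_reachable h, SimpleGraph.dist_eq_zero_of_not_reachable h']

def nV : ℕ := Fintype.card (Wt K)

noncomputable def eqv : Wt K ≃ Fin (nV K) := Fintype.equivFin _

noncomputable def Gf : SimpleGraph (Fin (nV K)) :=
  SimpleGraph.comap (fun i => (eqv K).symm i) (Gw K)

noncomputable def isoWF : Gf K ≃g Gw K :=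
  { toEquiv := (eqv K).symm, map_rel_iff' := Iff.rfl }

lemma Gf_dist (i j : Fin (nV K)) :
    (Gf K).dist i j = (Gw K).dist ((eqv K).symm i) ((eqv K).symm j) :=
  (iso_dist (isoWF K) i j).symm

lemma Gf_conn : (Gf K).Connected := ((isoWF K).connected_iff).mpr (conn K)

noncomputable def tfun (L : List (Fin (nV K))) : ZMod K :=
  baseIdx K ((eqv K).symm (L.getLastD (eqv K (cen K 0))))

noncomputable def Sfun (t₀ : ℕ) (L : List (Fin (nV K))) : Finset ℕ :=
  (Finset.Icc 1 (2*t₀+1)).filter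
    (fun dd : ℕ => eqv K (cen K (tfun K L + (dd : ZMod K))) ∉ L.toFinset)

noncomputable def dfun (t₀ : ℕ) (L : List (Fin (nV K))) : ℕ :=
  if h : (Sfun K t₀ L).Nonempty then (Sfun K t₀ L).min' h else 1

/-- B's strategy. -/
noncomputable def sigma (t₀ : ℕ) : List (Fin (nV K)) → Fin (nV K) := fun L =>
  eqv K (cen K (tfun K L + ((dfun K t₀ L : ℕ) : ZMod K)))


end VorB

section ListLemmas

variable {V : Type*}

lemma histList_getLastD (σ : List V → V) (a : ℕ → V) (k : ℕ) (d : V) :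
    (histList σ a k).getLastD d = a k := by
  cases k with
  | zero => rfl
  | succ m =>
    show ((histList σ a m ++ [σ (histList σ a m), a (m+1)]).getLastD d) = _
    rw [show [σ (histList σ a m), a (m+1)] = [σ (histList σ a m)] ++ [a (m+1)] from rfl,
      ← List.append_assoc]
    simp

lemma histList_length (σ : List V → V) (a : ℕ → V) (k : ℕ) :
    (histList σ a k).length = 2*k+1 := by
  induction k with
  | zero => rfl
  | succ m ih =>
    show (histList σ a m ++ [σ (histList σ a m), a (m+1)]).length = _
    simp [ih]
    omega

lemma histList_toFinset [DecidableEq V] (σ : List V → V) (a : ℕ → V) (k : ℕ) :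
    (histList σ a k).toFinset =
      (Finset.range (k+1)).image a ∪ (Finset.range k).image (bMove σ a) := by
  induction k with
  | zero => simp [histList]
  | succ m ih =>
    show (histList σ a m ++ [σ (histList σ a m), a (m+1)]).toFinset = _
    rw [List.toFinset_append, ih]
    ext v
    simp only [List.toFinset_cons, List.toFinset_nil, LawfulSingleton.insert_empty_eq, Finset.mem_union,
      Finset.mem_insert, Finset.mem_image, Finset.mem_range, Finset.mem_singleton]
    have hb : σ (histList σ a m) = bMove σ a m := rfl
    constructor
    · rintro ((⟨j, hj, rfl⟩ | ⟨j, hj, rfl⟩) | (h | h))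
      · exact Or.inl ⟨j, by omega, rfl⟩
      · exact Or.inr ⟨j, by omega, rfl⟩
      · exact Or.inr ⟨m, by omega, by rw [← hb, ← h]⟩
      · exact Or.inl ⟨m+1, by omega, h.symm⟩
    · rintro (⟨j, hj, rfl⟩ | ⟨j, hj, rfl⟩)
      · rcases Nat.lt_or_ge j (m+1) with h | h
        · exact Or.inl (Or.inl ⟨j, h, rfl⟩)
        · have : j = m+1 := by omega
          subst this
          exact Or.inr (Or.inr rfl)
      · rcases Nat.lt_or_ge j m with h | h
        · exact Or.inl (Or.inr ⟨j, h, rfl⟩)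
        · have : j = m := by omega
          subst this
          exact Or.inr (Or.inl hb.symm)

end ListLemmas

/-- For every `t₀ ≥ 1` and `ε > 0` there is a finite connected graph `G`
with `2t₀ ≤ |V(G)|` on which player B has a single strategy for the `t₀`-round Voronoi
game that always plays legally and, after each round `k = 1, …, t₀`, would score at
least `(1 − ε)·|V(G)|` if the unclaimed vertices were divided by the Voronoi rule. -/
theorem voronoi_B_dominates_every_round (t₀ : ℕ) (ht₀ : 1 ≤ t₀) (ε : ℝ) (hε : 0 < ε) :
    ∃ (n : ℕ) (G : SimpleGraph (Fin n)), G.Connected ∧ 2 * t₀ ≤ n ∧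
      ∃ σ : List (Fin n) → Fin n,
        ∀ a : ℕ → Fin n,
          (∀ k < t₀, a k ∉ (Finset.range k).image a ∪ (Finset.range k).image (bMove σ a)) →
            (∀ k < t₀, bMove σ a k ∉
                insert (a k) ((Finset.range k).image a ∪ (Finset.range k).image (bMove σ a))) ∧
            (∀ k, 1 ≤ k → k ≤ t₀ →
              (1 - ε) * n ≤
                scoreB G ((Finset.range k).image a) ((Finset.range k).image (bMove σ a))) := by
  classical
  set C := t₀ * (2*t₀+2) with hC
  obtain ⟨K₀, hK₀⟩ := exists_nat_gt (((C : ℝ) + 2) / ε)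
  set K := K₀ + 2*t₀ + C + 2 with hKdef
  haveI : NeZero K := ⟨by omega⟩
  have hKpos : 0 < K := by omega
  have hK2t : 2*t₀ + 2 ≤ K := by omega
  have hCK : C + 2 ≤ K := by omega
  have hKeps : ((C : ℝ) + 2) ≤ ε * K := by
    have h1 : ((C : ℝ) + 2) < ε * K₀ := by
      rw [div_lt_iff₀ hε] at hK₀
      calc ((C:ℝ)+2) < K₀ * ε := hK₀
        _ = ε * K₀ := by ring
    have h2 : (K₀ : ℝ) ≤ K := by
      have : K₀ ≤ K := by omega
      exact_mod_cast this
    nlinarith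
  -- abbreviations
  set n := VorB.nV K with hndef
  set Z : ℕ := 10*K^4 with hZ
  have hn : n = K + (K*K)*(10*K) + K*(Z+1) := by
    simp [hndef, VorB.nV, VorB.Wt, ZMod.card]
    ring
  set G := VorB.Gf K with hG
  set σ := VorB.sigma K t₀ with hσ
  refine ⟨n, G, VorB.Gf_conn K, by omega, σ, ?_⟩
  intro a ha
  -- round-by-round data
  set e := VorB.eqv K with he
  have hbM : ∀ k, bMove σ a k =
      e (VorB.cen K (VorB.tfun K (histList σ a k) +
        ((VorB.dfun K t₀ (histList σ a k) : ℕ) : ZMod K))) := fun k => rfl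
  have htfun : ∀ k, VorB.tfun K (histList σ a k) = VorB.baseIdx K (e.symm (a k)) := by
    intro k
    rw [VorB.tfun, histList_getLastD]
  have hSne : ∀ k < t₀, (VorB.Sfun K t₀ (histList σ a k)).Nonempty := by
    intro k hk
    by_contra hcon
    rw [Finset.not_nonempty_iff_eq_empty] at hcon
    have hmem : ∀ dd ∈ Finset.Icc 1 (2*t₀+1),
        e (VorB.cen K (VorB.tfun K (histList σ a k) + (dd : ZMod K)))
          ∈ (histList σ a k).toFinset := by
      intro dd hdd
      by_contra hnm
      have : dd ∈ VorB.Sfun K t₀ (histList σ a k) := by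
        rw [VorB.Sfun, Finset.mem_filter]
        exact ⟨hdd, hnm⟩
      rw [hcon] at this
      exact absurd this (Finset.notMem_empty dd)
    have hinj : Set.InjOn (fun dd : ℕ => e (VorB.cen K (VorB.tfun K (histList σ a k) + (dd : ZMod K))))
        (Finset.Icc 1 (2*t₀+1)) := by
      intro d₁ h₁ d₂ h₂ hedd
      simp only [Finset.coe_Icc, Set.mem_Icc, Finset.mem_Icc] at h₁ h₂
      have : VorB.cen K (VorB.tfun K (histList σ a k) + (d₁ : ZMod K)) =
          VorB.cen K (VorB.tfun K (histList σ a k) + (d₂ : ZMod K)) := e.injective hedd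
      have h3 : ((d₁ : ZMod K)) = (d₂ : ZMod K) := by
        have := Sum.inl.inj this
        exact add_left_cancel this
      have h4 : (d₁ : ZMod K).val = (d₂ : ZMod K).val := by rw [h3]
      rwa [ZMod.val_cast_of_lt (by omega), ZMod.val_cast_of_lt (by omega)] at h4
    have hcard := Finset.card_le_card_of_injOn _ hmem hinj
    rw [Nat.card_Icc] at hcard
    have hlen := histList_length σ a k
    have htf := List.toFinset_card_le (histList σ a k)
    omega
  have hddmem : ∀ k < t₀, VorB.dfun K t₀ (histList σ a k) ∈ VorB.Sfun K t₀ (histList σ a k) := by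
    intro k hk
    rw [VorB.dfun, dif_pos (hSne k hk)]
    exact Finset.min'_mem _ _
  have hdd1 : ∀ k < t₀, 1 ≤ VorB.dfun K t₀ (histList σ a k) ∧
      VorB.dfun K t₀ (histList σ a k) ≤ 2*t₀+1 := by
    intro k hk
    have := hddmem k hk
    rw [VorB.Sfun, Finset.mem_filter, Finset.mem_Icc] at this
    exact this.1
  have hfresh : ∀ k < t₀, bMove σ a k ∉ (histList σ a k).toFinset := by
    intro k hk
    have := hddmem k hk
    rw [VorB.Sfun, Finset.mem_filter] at this
    rw [hbM k]
    exact this.2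
  have hinsert : ∀ k, insert (a k) ((Finset.range k).image a ∪ (Finset.range k).image (bMove σ a))
      = (histList σ a k).toFinset := by
    intro k
    rw [histList_toFinset, Finset.range_add_one, Finset.image_insert, Finset.insert_union]
  constructor
  · -- legality of B
    intro k hk
    rw [hinsert k]
    exact hfresh k hk
  · -- score bound
    intro k hk1 hkt
    have hkt' : ∀ j, j < k → j < t₀ := fun j hj => lt_of_lt_of_le hj hkt
    set dj : ℕ → ℕ := fun j => VorB.dfun K t₀ (histList σ a j) with hdjdef
    set tj : ℕ → ZMod K := fun j => VorB.baseIdx K (e.symm (a j)) with htjdef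
    -- per-round, per-vertex domination
    have hkey : ∀ j, j < k → ∀ (g : ZMod K) (o : Option (Fin (10*K^4))),
        dj j ≤ (g - tj j).val → VorB.hubIdx K (e.symm (a j)) ≠ some g →
        G.dist (bMove σ a j) (e (VorB.mas K g o)) + 1 ≤ G.dist (a j) (e (VorB.mas K g o)) := by
      intro j hj g o hd2 hg
      rw [hbM j, hG, VorB.Gf_dist, VorB.Gf_dist]
      simp only [Equiv.symm_apply_apply, he]
      rw [htfun j]
      exact VorB.key K ((VorB.eqv K).symm (a j)) g (dj j) (hdd1 j (hkt' j hj)).1 hd2 hg o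
    -- the set of good group indices
    set Good : Finset (ZMod K) := Finset.univ.filter
      (fun g => ∀ j, j < k → dj j ≤ (g - tj j).val ∧
        VorB.hubIdx K (e.symm (a j)) ≠ some g) with hGoodDef
    have hGoodCard : K - C ≤ Good.card := by
      have hbad : ∀ j, j < k →
          (Finset.univ.filter (fun g : ZMod K => ¬ (dj j ≤ (g - tj j).val ∧
            VorB.hubIdx K (e.symm (a j)) ≠ some g))).card ≤ 2*t₀+2 := by
        intro j hj
        have hsub : (Finset.univ.filter (fun g : ZMod K => ¬ (dj j ≤ (g - tj j).val ∧
            VorB.hubIdx K (e.symm (a j)) ≠ some g))) ⊆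
            (Finset.univ.filter (fun g : ZMod K => (g - tj j).val < dj j)) ∪
            (Finset.univ.filter (fun g : ZMod K => VorB.hubIdx K (e.symm (a j)) = some g)) := by
          intro g hg
          simp only [Finset.mem_filter, Finset.mem_union, Finset.mem_univ, true_and] at *
          by_cases h1 : dj j ≤ (g - tj j).val
          · right
            by_contra h2
            exact hg ⟨h1, h2⟩
          · left; omega
        have hc1 : (Finset.univ.filter (fun g : ZMod K => (g - tj j).val < dj j)).card ≤ dj j := by
          have := Finset.card_le_card_of_injOn (fun g : ZMod K => (g - tj j).val)
            (s := Finset.univ.filter (fun g : ZMod K => (g - tj j).val < dj j))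
            (t := Finset.range (dj j))
            (by intro g hg
                simp only [Finset.coe_filter, Finset.mem_coe, Finset.mem_filter, Finset.mem_univ, true_and, Set.mem_setOf_eq] at hg
                exact Finset.mem_range.mpr hg)
            (by intro g₁ _ g₂ _ hval
                have := ZMod.val_injective K hval
                exact sub_left_injective.eq_iff.mp this)
          simpa using this
        have hc2 : (Finset.univ.filter
            (fun g : ZMod K => VorB.hubIdx K (e.symm (a j)) = some g)).card ≤ 1 := by
          apply Finset.card_le_one.mpr
          intro g₁ h₁ g₂ h₂
          simp only [Finset.mem_filter, Finset.mem_univ, true_and] at h₁ h₂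
          exact Option.some_injective _ (h₁.symm.trans h₂)
        have hcu := Finset.card_union_le
          (Finset.univ.filter (fun g : ZMod K => (g - tj j).val < dj j))
          (Finset.univ.filter (fun g : ZMod K => VorB.hubIdx K (e.symm (a j)) = some g))
        have hdub := (hdd1 j (hkt' j hj)).2
        have hcc := Finset.card_le_card hsub
        have hmr : dj j = VorB.dfun K t₀ (histList σ a j) := rfl
        omega
      have hsub2 : Finset.univ.filter (fun g : ZMod K => ¬ (∀ j, j < k → dj j ≤ (g - tj j).val ∧
          VorB.hubIdx K (e.symm (a j)) ≠ some g)) ⊆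
          (Finset.range k).biUnion (fun j => Finset.univ.filter
            (fun g : ZMod K => ¬ (dj j ≤ (g - tj j).val ∧
              VorB.hubIdx K (e.symm (a j)) ≠ some g))) := by
        intro g hg
        simp only [Finset.mem_filter, Finset.mem_univ, true_and, not_forall] at hg
        obtain ⟨j, hj, hnot⟩ := hg
        refine Finset.mem_biUnion.mpr ⟨j, Finset.mem_range.mpr hj, ?_⟩
        simp only [Finset.mem_filter, Finset.mem_univ, true_and]
        tauto
      have hbUr : ((Finset.range k).biUnion (fun j => Finset.univ.filter
            (fun g : ZMod K => ¬ (dj j ≤ (g - tj j).val ∧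
              VorB.hubIdx K (e.symm (a j)) ≠ some g)))).card ≤ k * (2*t₀+2) := by
        calc _ ≤ ∑ j ∈ Finset.range k, (Finset.univ.filter
              (fun g : ZMod K => ¬ (dj j ≤ (g - tj j).val ∧
                VorB.hubIdx K (e.symm (a j)) ≠ some g))).card := Finset.card_biUnion_le
          _ ≤ ∑ j ∈ Finset.range k, (2*t₀+2) := by
              apply Finset.sum_le_sum
              intro j hj
              exact hbad j (Finset.mem_range.mp hj)
          _ = k * (2*t₀+2) := by rw [Finset.sum_const, Finset.card_range, smul_eq_mul]
      have hcompl := Finset.card_filter_add_card_filter_not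
        (s := (Finset.univ : Finset (ZMod K)))
        (p := fun g : ZMod K => ∀ j, j < k → dj j ≤ (g - tj j).val ∧
          VorB.hubIdx K (e.symm (a j)) ≠ some g)
      rw [← hGoodDef, Finset.card_univ, ZMod.card] at hcompl
      have hcards := Finset.card_le_card hsub2
      have hkC : k * (2*t₀+2) ≤ C := by
        rw [hC]
        exact Nat.mul_le_mul_right _ hkt
      omega
    -- the good vertices
    set TF : Finset (Fin n) := (Good ×ˢ (Finset.univ : Finset (Option (Fin (10*K^4))))).image
      (fun p => e (VorB.mas K p.1 p.2)) with hTFdef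
    have hTFcard : TF.card = Good.card * (Z+1) := by
      rw [hTFdef, Finset.card_image_of_injOn, Finset.card_product]
      · simp [hZ]
      · intro p₁ _ p₂ _ hpe
        have := e.injective hpe
        simp only [VorB.mas, Sum.inr.injEq, Prod.mk.injEq] at this
        exact Prod.ext this.1 this.2
    have hvert : ∀ v ∈ TF,
        distToSet G ((Finset.range k).image (bMove σ a)) v <
          distToSet G ((Finset.range k).image a) v := by
      intro v hv
      rw [hTFdef, Finset.mem_image] at hv
      obtain ⟨⟨g, o⟩, hpmem, rfl⟩ := hv
      have hgmem : g ∈ Good := (Finset.mem_product.mp hpmem).1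
      rw [hGoodDef, Finset.mem_filter] at hgmem
      have hgood := hgmem.2
      have hrne : (Finset.range k).Nonempty := ⟨0, Finset.mem_range.mpr (by omega)⟩
      rw [distToSet, distToSet, Finset.inf_image, Finset.inf_image]
      obtain ⟨j₀, hj₀mem, hj₀eq⟩ := Finset.exists_mem_eq_inf (Finset.range k) hrne
        ((fun x => (G.dist x (e (VorB.mas K g o)) : ℕ∞)) ∘ a)
      rw [hj₀eq]
      have hj₀ : j₀ < k := Finset.mem_range.mp hj₀mem
      have hkey₀ := hkey j₀ hj₀ g o (hgood j₀ hj₀).1 (hgood j₀ hj₀).2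
      calc (Finset.range k).inf ((fun x => (G.dist x (e (VorB.mas K g o)) : ℕ∞)) ∘ (bMove σ a))
          ≤ (G.dist (bMove σ a j₀) (e (VorB.mas K g o)) : ℕ∞) := Finset.inf_le hj₀mem
        _ < (G.dist (a j₀) (e (VorB.mas K g o)) : ℕ∞) := by
            rw [Nat.cast_lt]
            omega
    have hsum : (TF.card : ℝ) ≤
        scoreB G ((Finset.range k).image a) ((Finset.range k).image (bMove σ a)) := by
      rw [scoreB]
      calc (TF.card : ℝ) = ∑ v ∈ TF, (1 : ℝ) := by
            rw [Finset.sum_const, nsmul_eq_mul, mul_one]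
        _ = ∑ v ∈ TF,
            (if distToSet G ((Finset.range k).image (bMove σ a)) v <
                distToSet G ((Finset.range k).image a) v then (1:ℝ)
              else if distToSet G ((Finset.range k).image (bMove σ a)) v =
                distToSet G ((Finset.range k).image a) v then 1/2 else 0) := by
            apply Finset.sum_congr rfl
            intro v hv
            rw [if_pos (hvert v hv)]
        _ ≤ _ := by
            apply Finset.sum_le_sum_of_subset_of_nonneg (Finset.subset_univ TF)
            intro v _ _
            split_ifs <;> norm_num
    -- final arithmetic
    have hmul : ((K - C) * (Z+1) : ℕ) ≤ TF.card := by
      rw [hTFcard]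
      exact Nat.mul_le_mul_right _ hGoodCard
    have hfinal : (1 - ε) * (n:ℝ) ≤ (((K - C) * (Z+1) : ℕ) : ℝ) := by
      have e2 : K^3 ≤ K^4 := Nat.pow_le_pow_right (by omega) (by omega)
      have e3 : K ≤ K^4 := Nat.le_self_pow (by omega) K
      have e1 : K + (K*K)*(10*K) ≤ 2*(Z+1) := by
        have : (K*K)*(10*K) = 10*K^3 := by ring
        omega
      have hKZn : K*(Z+1) ≤ n := by omega
      have hnR : (n:ℝ) = (K:ℝ) + ((K:ℝ)*K)*(10*K) + K*((Z:ℝ)+1) := by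
        rw [hn]; push_cast; ring
      have he1R : (K:ℝ) + ((K:ℝ)*K)*(10*K) ≤ 2*((Z:ℝ)+1) := by exact_mod_cast e1
      have hKZnR : (K:ℝ)*((Z:ℝ)+1) ≤ (n:ℝ) := by exact_mod_cast hKZn
      have hεn : ε * ((K:ℝ)*((Z:ℝ)+1)) ≤ ε * (n:ℝ) :=
        mul_le_mul_of_nonneg_left hKZnR hε.le
      have hCe : ((C:ℝ)+2)*((Z:ℝ)+1) ≤ (ε*K)*((Z:ℝ)+1) :=
        mul_le_mul_of_nonneg_right hKeps (by positivity)
      have hcast1 : (((K - C) * (Z+1) : ℕ) : ℝ) = ((K:ℝ) - C) * ((Z:ℝ)+1) := by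
        rw [Nat.cast_mul, Nat.cast_sub (by omega : C ≤ K)]
        push_cast
        ring
      rw [hcast1]
      have hid : ((K:ℝ))*((Z:ℝ)+1) = ((K:ℝ)-(C:ℝ))*((Z:ℝ)+1) + (C:ℝ)*((Z:ℝ)+1) := by ring
      have hn2 : (n:ℝ) ≤ ((K:ℝ)-(C:ℝ))*((Z:ℝ)+1) + ((C:ℝ)+2)*((Z:ℝ)+1) := by
        have hCZ : (0:ℝ) ≤ (C:ℝ)*((Z:ℝ)+1) := by positivity
        linarith [he1R, hnR, hid]
      have hassoc : (ε*(K:ℝ))*((Z:ℝ)+1) = ε*((K:ℝ)*((Z:ℝ)+1)) := by ring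
      have hfin2 : (1-ε)*(n:ℝ) = (n:ℝ) - ε*(n:ℝ) := by ring
      linarith [hn2, hCe, hεn, hassoc, hfin2]
    calc (1 - ε) * (n:ℝ) ≤ (((K - C) * (Z+1) : ℕ) : ℝ) := hfinal
      _ ≤ (TF.card : ℝ) := by exact_mod_cast hmul
      _ ≤ _ := hsum
end

section
/- Let k ≥ 2 be an integer and let S_{k,N} be the spider graph obtained from the star with k leaves by replacing each leaf by a path with N vertices (so S_{k,N} has a center vertex with k attached legs, each leg a path on N vertices, and kN + 1 vertices in total). Then VR(S_{k,N}, 1) → 1 − 1/k as N → ∞; that is, for every ε > 0 there exists N₀ such that |VR(S_{k,N}, 1) − (1 − 1/k)| < ε for all N ≥ N₀. -/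
open SimpleGraph

variable {V : Type*}

/-- The spider `S_{k,N}`: a center vertex (`none`) with `k` legs, each leg a path on `N`
vertices; `some (i, j)` is the vertex at position `j` (counted from the center) on leg `i`. -/
def spider (k N : ℕ) : SimpleGraph (Option (Fin k × Fin N)) :=
  SimpleGraph.fromRel (fun u v =>
    (∃ (i : Fin k) (j : Fin N), u = none ∧ v = some (i, j) ∧ (j : ℕ) = 0) ∨
    (∃ (i : Fin k) (j j' : Fin N), u = some (i, j) ∧ v = some (i, j') ∧ (j : ℕ) + 1 = j'))

namespace VrSpider
variable {k N : ℕ}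

lemma spider_adj_center (i : Fin k) (hN : 0 < N) :
    (spider k N).Adj none (some (i, ⟨0, hN⟩)) := by
  rw [spider, SimpleGraph.fromRel_adj]
  exact ⟨by simp, Or.inl (Or.inl ⟨i, ⟨0, hN⟩, rfl, rfl, rfl⟩)⟩

lemma spider_adj_step (i : Fin k) (j j' : Fin N) (h : (j : ℕ) + 1 = j') :
    (spider k N).Adj (some (i, j)) (some (i, j')) := by
  rw [spider, SimpleGraph.fromRel_adj]
  refine ⟨?_, Or.inl (Or.inr ⟨i, j, j', rfl, rfl, h⟩)⟩
  intro heq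
  rw [Option.some_inj, Prod.mk.injEq] at heq
  have := congrArg Fin.val heq.2
  omega

lemma spider_adj_cases {u v : Option (Fin k × Fin N)} (h : (spider k N).Adj u v) :
    (∃ (i : Fin k) (j : Fin N), (j : ℕ) = 0 ∧
      ((u = none ∧ v = some (i, j)) ∨ (v = none ∧ u = some (i, j)))) ∨
    (∃ (i : Fin k) (j j' : Fin N), (j : ℕ) + 1 = j' ∧
      ((u = some (i, j) ∧ v = some (i, j')) ∨ (v = some (i, j) ∧ u = some (i, j')))) := by
  rw [spider, SimpleGraph.fromRel_adj] at h
  obtain ⟨-, h | h⟩ := h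
  · rcases h with ⟨i, j, h1, h2⟩ | ⟨i, j, j', h1, h2, h3⟩
    · exact Or.inl ⟨i, j, h2.2, Or.inl ⟨h1, h2.1⟩⟩
    · exact Or.inr ⟨i, j, j', h3, Or.inl ⟨h1, h2⟩⟩
  · rcases h with ⟨i, j, h1, h2⟩ | ⟨i, j, j', h1, h2, h3⟩
    · exact Or.inl ⟨i, j, h2.2, Or.inr ⟨h1, h2.1⟩⟩
    · exact Or.inr ⟨i, j, j', h3, Or.inr ⟨h1, h2⟩⟩

lemma abs_sub_le_length {W : Type*} {G : SimpleGraph W} (f : W → ℤ)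
    (hf : ∀ u v, G.Adj u v → |f u - f v| ≤ 1) {u v : W} (p : G.Walk u v) :
    |f u - f v| ≤ (p.length : ℤ) := by
  induction p with
  | nil => simp
  | @cons a b c h q ih =>
      rw [Walk.length_cons]
      calc |f a - f c| ≤ |f a - f b| + |f b - f c| := abs_sub_le _ _ _
        _ ≤ 1 + q.length := add_le_add (hf _ _ h) ih
        _ = ((q.length + 1 : ℕ) : ℤ) := by push_cast; ring

lemma abs_sub_le_dist {W : Type*} {G : SimpleGraph W} (f : W → ℤ)
    (hf : ∀ u v, G.Adj u v → |f u - f v| ≤ 1) {u v : W} (h : G.Reachable u v) :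
    |f u - f v| ≤ (G.dist u v : ℤ) := by
  obtain ⟨p, hp⟩ := h.exists_walk_length_eq_dist
  rw [← hp]; exact abs_sub_le_length f hf p

/-- Signed distance-to-center potential. -/
def gI (i0 : Fin k) : Option (Fin k × Fin N) → ℤ
  | none => 0
  | some (i, j) => if i = i0 then (j : ℤ) + 1 else -((j : ℤ) + 1)

lemma gI_lip (i0 : Fin k) : ∀ u v, (spider k N).Adj u v → |gI i0 u - gI i0 v| ≤ 1 := by
  intro u v h
  rcases spider_adj_cases h with ⟨i, j, hj, ⟨rfl, rfl⟩ | ⟨rfl, rfl⟩⟩ |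
    ⟨i, j, j', hj, ⟨rfl, rfl⟩ | ⟨rfl, rfl⟩⟩ <;>
    simp only [gI] <;> by_cases hi : i = i0 <;>
    simp only [if_pos, hi, if_neg, if_true, if_false] <;>
    rw [abs_le] <;> constructor <;> omega

lemma gI_none (i0 : Fin k) : gI (N := N) i0 none = 0 := rfl
lemma gI_same (i0 : Fin k) (j : Fin N) : gI i0 (some (i0, j)) = (j : ℤ) + 1 := by simp [gI]
lemma gI_other (i0 i : Fin k) (h : i ≠ i0) (j : Fin N) :
    gI i0 (some (i, j)) = -((j : ℤ) + 1) := by simp [gI, h]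

lemma walk_center (i : Fin k) : ∀ (j : ℕ) (hj : j < N),
    ∃ p : (spider k N).Walk none (some (i, ⟨j, hj⟩)), p.length = j + 1
  | 0, hj => ⟨(spider_adj_center i hj).toWalk, rfl⟩
  | (j+1), hj => by
      obtain ⟨p, hp⟩ := walk_center i j (by omega)
      exact ⟨p.concat (spider_adj_step i ⟨j, by omega⟩ ⟨j+1, hj⟩ rfl),
        by rw [Walk.length_concat, hp]⟩

lemma walk_up (i : Fin k) : ∀ (d j : ℕ) (hj : j < N) (h : j + d < N),
    ∃ p : (spider k N).Walk (some (i, ⟨j, hj⟩)) (some (i, ⟨j + d, h⟩)), p.length = d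
  | 0, j, hj, h => ⟨Walk.nil, rfl⟩
  | (d+1), j, hj, h => by
      obtain ⟨p, hp⟩ := walk_up i d j hj (by omega)
      exact ⟨p.concat (spider_adj_step i ⟨j + d, by omega⟩ ⟨j + (d+1), h⟩ rfl),
        by rw [Walk.length_concat, hp]⟩

lemma dist_center (i : Fin k) (j : Fin N) :
    (spider k N).dist none (some (i, j)) = (j : ℕ) + 1 := by
  obtain ⟨p0, hp⟩ := walk_center i (j : ℕ) j.isLt
  let p := p0.copy rfl (by rw [Fin.eta])
  have hp' : p.length = (j : ℕ) + 1 := by simp only [p, Walk.length_copy]; exact hp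
  have hle : (spider k N).dist none (some (i, j)) ≤ (j : ℕ) + 1 := hp' ▸ dist_le p
  have hge := abs_sub_le_dist (gI i) (gI_lip i) ⟨p⟩
  rw [gI_none, gI_same, abs_le] at hge
  omega

lemma dist_same (i : Fin k) (j p : Fin N) (h : (j : ℕ) ≤ p) :
    (spider k N).dist (some (i, j)) (some (i, p)) = (p : ℕ) - j := by
  obtain ⟨d, hd⟩ := Nat.exists_eq_add_of_le h
  obtain ⟨q0, hq⟩ := walk_up i d (j : ℕ) j.isLt (hd ▸ p.isLt)
  have e2 : (⟨(j : ℕ) + d, hd ▸ p.isLt⟩ : Fin N) = p := Fin.ext hd.symm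
  let q := q0.copy (by rw [Fin.eta]) (by rw [e2])
  have hq' : q.length = d := by simp only [q, Walk.length_copy]; exact hq
  have hle : (spider k N).dist (some (i, j)) (some (i, p)) ≤ d := hq' ▸ dist_le q
  have hge := abs_sub_le_dist (gI i) (gI_lip i) ⟨q⟩
  rw [gI_same, gI_same, abs_le] at hge
  omega

lemma dist_diff (i i' : Fin k) (hii : i ≠ i') (j p : Fin N) :
    (spider k N).dist (some (i, j)) (some (i', p)) = (j : ℕ) + p + 2 := by
  obtain ⟨q10, hq1⟩ := walk_center i (j : ℕ) j.isLt
  obtain ⟨q20, hq2⟩ := walk_center i' (p : ℕ) p.isLt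
  let q1 := q10.copy rfl (by rw [Fin.eta])
  let q2 := q20.copy rfl (by rw [Fin.eta])
  have hle : (spider k N).dist (some (i, j)) (some (i', p)) ≤ (j : ℕ) + p + 2 := by
    have := dist_le (q1.reverse.append q2)
    rwa [Walk.length_append, Walk.length_reverse, show q1.length = (j:ℕ)+1 from by
        simp only [q1, Walk.length_copy]; exact hq1,
      show q2.length = (p:ℕ)+1 from by simp only [q2, Walk.length_copy]; exact hq2,
      show (j:ℕ)+1+((p:ℕ)+1) = (j:ℕ)+p+2 by omega] at this
  have hge := abs_sub_le_dist (gI i) (gI_lip i) ⟨q1.reverse.append q2⟩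
  rw [gI_same, gI_other i i' (Ne.symm hii) p, abs_le] at hge
  omega

/-! ### Scores -/

lemma distToSet_singleton {W : Type*} (G : SimpleGraph W) (a v : W) :
    distToSet G {a} v = (G.dist a v : ℕ∞) := Finset.inf_singleton

lemma scoreA_singleton {W : Type*} [Fintype W] (G : SimpleGraph W) (a b : W) :
    scoreA G {a} {b} = ∑ v, (if G.dist a v < G.dist b v then (1:ℝ)
      else if G.dist a v = G.dist b v then 1/2 else 0) := by
  unfold scoreA
  refine Finset.sum_congr rfl fun v _ => ?_
  rw [distToSet_singleton, distToSet_singleton]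
  simp [Nat.cast_lt, Nat.cast_inj]

lemma scoreB_singleton {W : Type*} [Fintype W] (G : SimpleGraph W) (a b : W) :
    scoreB G {a} {b} = ∑ v, (if G.dist b v < G.dist a v then (1:ℝ)
      else if G.dist b v = G.dist a v then 1/2 else 0) := by
  unfold scoreB
  refine Finset.sum_congr rfl fun v _ => ?_
  rw [distToSet_singleton, distToSet_singleton]
  simp [Nat.cast_lt, Nat.cast_inj]

lemma scoreA_nonneg {W : Type*} [Fintype W] (G : SimpleGraph W) (A B : Finset W) :
    0 ≤ scoreA G A B := by
  unfold scoreA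
  refine Finset.sum_nonneg fun v _ => ?_
  split_ifs <;> norm_num

lemma scoreA_add_scoreB {W : Type*} [Fintype W] (G : SimpleGraph W) (A B : Finset W) :
    scoreA G A B + scoreB G A B = Fintype.card W := by
  unfold scoreA scoreB
  rw [← Finset.sum_add_distrib]
  have h : ∀ v : W, ((if distToSet G A v < distToSet G B v then (1:ℝ)
      else if distToSet G A v = distToSet G B v then 1/2 else 0) +
      (if distToSet G B v < distToSet G A v then (1:ℝ)
      else if distToSet G B v = distToSet G A v then 1/2 else 0)) = 1 := by
    intro v
    rcases lt_trichotomy (distToSet G A v) (distToSet G B v) with h | h | h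
    · rw [if_pos h, if_neg h.asymm, if_neg h.ne']; norm_num
    · rw [if_neg (by rw [h]; exact lt_irrefl _), if_pos h,
        if_neg (by rw [h]; exact lt_irrefl _), if_pos h.symm]; norm_num
    · rw [if_neg h.asymm, if_neg h.ne', if_pos h]; norm_num
  rw [Finset.sum_congr rfl fun v _ => h v, Finset.sum_const, Finset.card_univ,
    nsmul_eq_mul, mul_one]

lemma sum_le_leg (i0 : Fin k) (h : Option (Fin k × Fin N) → ℝ) (h0 : h none = 0)
    (hoff : ∀ i p, i ≠ i0 → h (some (i, p)) = 0) (hle : ∀ p, h (some (i0, p)) ≤ 1) :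
    ∑ v, h v ≤ (N : ℝ) := by
  rw [Fintype.sum_option, h0, zero_add, Fintype.sum_prod_type]
  have key : ∀ i : Fin k, ∑ p : Fin N, h (some (i, p)) ≤ if i = i0 then (N:ℝ) else 0 := by
    intro i
    by_cases hi : i = i0
    · subst hi
      rw [if_pos rfl]
      calc ∑ p : Fin N, h (some (i, p)) ≤ ∑ _p : Fin N, (1:ℝ) :=
            Finset.sum_le_sum fun p _ => hle p
        _ = N := by simp
    · rw [if_neg hi, Finset.sum_congr rfl fun p _ => hoff i p hi, Finset.sum_const,
        smul_zero]
  calc ∑ i : Fin k, ∑ p, h (some (i, p)) ≤ ∑ i : Fin k, (if i = i0 then (N:ℝ) else 0) :=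
        Finset.sum_le_sum fun i _ => key i
    _ = N := by simp

lemma sum_eq_leg (i0 : Fin k) (h : Option (Fin k × Fin N) → ℝ) (h0 : h none = 0)
    (hoff : ∀ i p, i ≠ i0 → h (some (i, p)) = 0) (heq : ∀ p, h (some (i0, p)) = 1) :
    ∑ v, h v = (N : ℝ) := by
  rw [Fintype.sum_option, h0, zero_add, Fintype.sum_prod_type]
  have key : ∀ i : Fin k, ∑ p : Fin N, h (some (i, p)) = if i = i0 then (N:ℝ) else 0 := by
    intro i
    by_cases hi : i = i0
    · subst hi
      rw [if_pos rfl, Finset.sum_congr rfl fun p _ => heq p, Finset.sum_const]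
      simp
    · rw [if_neg hi, Finset.sum_congr rfl fun p _ => hoff i p hi, Finset.sum_const,
        smul_zero]
  rw [Finset.sum_congr rfl fun i _ => key i]
  simp

lemma scoreB_none_le (i0 : Fin k) (j0 : Fin N) :
    scoreB (spider k N) {none} {some (i0, j0)} ≤ (N : ℝ) := by
  rw [scoreB_singleton]
  apply sum_le_leg i0
  · rw [SimpleGraph.dist_comm (v := none), dist_center, SimpleGraph.dist_self]
    rw [if_neg (by omega), if_neg (by omega)]
  · intro i p hi
    rw [dist_diff i0 i (Ne.symm hi), dist_center]
    rw [if_neg (by omega), if_neg (by omega)]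
  · intro p
    split_ifs <;> norm_num

lemma scoreB_none_eq (hN : 0 < N) (i0 : Fin k) :
    scoreB (spider k N) {none} {some (i0, ⟨0, hN⟩)} = (N : ℝ) := by
  rw [scoreB_singleton]
  apply sum_eq_leg i0
  · rw [SimpleGraph.dist_comm (v := none), dist_center, SimpleGraph.dist_self]
    rw [if_neg (by omega), if_neg (by omega)]
  · intro i p hi
    rw [dist_diff i0 i (Ne.symm hi), dist_center]
    rw [if_neg (by omega), if_neg (by omega)]
  · intro p
    rw [dist_same i0 ⟨0, hN⟩ p (Nat.zero_le _), dist_center]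
    rw [if_pos (by omega)]

lemma scoreA_some_le (i0 : Fin k) (j0 : Fin N) :
    scoreA (spider k N) {some (i0, j0)} {none} ≤ (N : ℝ) := by
  rw [scoreA_singleton]
  apply sum_le_leg i0
  · rw [SimpleGraph.dist_comm (v := none), dist_center, SimpleGraph.dist_self]
    rw [if_neg (by omega), if_neg (by omega)]
  · intro i p hi
    rw [dist_diff i0 i (Ne.symm hi), dist_center]
    rw [if_neg (by omega), if_neg (by omega)]
  · intro p
    split_ifs <;> norm_num

lemma card_spider : (Fintype.card (Option (Fin k × Fin N)) : ℝ) = (k : ℝ) * N + 1 := by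
  rw [Fintype.card_option, Fintype.card_prod, Fintype.card_fin, Fintype.card_fin]
  push_cast
  ring

lemma scoreA_none_ge (i0 : Fin k) (j0 : Fin N) :
    (k : ℝ) * N + 1 - N ≤ scoreA (spider k N) {none} {some (i0, j0)} := by
  have h1 := scoreA_add_scoreB (spider k N) {none} {some (i0, j0)}
  have h2 := scoreB_none_le i0 j0
  rw [card_spider] at h1
  linarith

lemma scoreA_none_eq (hN : 0 < N) (i0 : Fin k) :
    scoreA (spider k N) {none} {some (i0, ⟨0, hN⟩)} = (k : ℝ) * N + 1 - N := by
  have h1 := scoreA_add_scoreB (spider k N) {none} {some (i0, ⟨0, hN⟩)}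
  have h2 := scoreB_none_eq hN i0
  rw [card_spider] at h1
  linarith

lemma gameValue_one (hk : 2 ≤ k) (hN : 0 < N) :
    gameValue (spider k N) 1 ∅ ∅ = (k : ℝ) * N + 1 - N := by
  have hk0 : 0 < k := by omega
  set G := spider k N with hG
  set M : ℝ := (k : ℝ) * N + 1 - N with hM
  set i0 : Fin k := ⟨0, hk0⟩ with hi0
  set z : Fin N := ⟨0, hN⟩ with hz
  set T : Option (Fin k × Fin N) → Set ℝ := fun a =>
    {s : ℝ | ∃ b, b ∉ insert a (∅ : Finset (Option (Fin k × Fin N))) ∧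
      b ∉ (∅ : Finset (Option (Fin k × Fin N))) ∧
      s = gameValue G 0 (insert a ∅) (insert b ∅)} with hT
  have hgv0 : ∀ A B, gameValue G 0 A B = scoreA G A B := fun _ _ => rfl
  have hInfNone : sInf (T none) = M := by
    have hmem : M ∈ T none := by
      refine ⟨some (i0, z), by simp, by simp, ?_⟩
      rw [hgv0]
      exact (scoreA_none_eq hN i0).symm
    have hlb : ∀ s ∈ T none, M ≤ s := by
      rintro s ⟨b, hb1, -, rfl⟩
      rw [hgv0]
      match b with
      | none => simp at hb1
      | some (i, j) => exact scoreA_none_ge i j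
    exact le_antisymm (csInf_le ⟨M, hlb⟩ hmem) (le_csInf ⟨M, hmem⟩ hlb)
  have hInfLe : ∀ a, sInf (T a) ≤ M := by
    intro a
    match a with
    | none => rw [hInfNone]
    | some (i, j) =>
        have hmem : scoreA G {some (i, j)} {none} ∈ T (some (i, j)) :=
          ⟨none, by simp, by simp, (hgv0 _ _).symm⟩
        have hb : BddBelow (T (some (i, j))) := by
          refine ⟨0, ?_⟩
          rintro s ⟨b, -, -, rfl⟩
          rw [hgv0]
          exact scoreA_nonneg _ _ _
        have hx : (2:ℝ) ≤ (k:ℝ) := by exact_mod_cast hk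
        have hn : (0:ℝ) ≤ (N:ℝ) := by positivity
        calc sInf (T (some (i, j))) ≤ scoreA G {some (i, j)} {none} := csInf_le hb hmem
          _ ≤ (N : ℝ) := scoreA_some_le i j
          _ ≤ M := by rw [hM]; nlinarith
  show sSup {r : ℝ | ∃ a, a ∉ (∅ : Finset (Option (Fin k × Fin N))) ∧
      a ∉ (∅ : Finset (Option (Fin k × Fin N))) ∧ r = sInf (T a)} = M
  have hmemS : M ∈ {r : ℝ | ∃ a, a ∉ (∅ : Finset (Option (Fin k × Fin N))) ∧
      a ∉ (∅ : Finset (Option (Fin k × Fin N))) ∧ r = sInf (T a)} :=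
    ⟨none, by simp, by simp, hInfNone.symm⟩
  have hub : ∀ r ∈ {r : ℝ | ∃ a, a ∉ (∅ : Finset (Option (Fin k × Fin N))) ∧
      a ∉ (∅ : Finset (Option (Fin k × Fin N))) ∧ r = sInf (T a)}, r ≤ M := by
    rintro r ⟨a, -, -, rfl⟩
    exact hInfLe a
  exact le_antisymm (csSup_le ⟨M, hmemS⟩ hub) (le_csSup ⟨M, hub⟩ hmemS)

end VrSpider

/-- For every `k ≥ 2`, `VR(S_{k,N}, 1) → 1 − 1/k` as `N → ∞`. -/
theorem vr_spider_tendsto (k : ℕ) (hk : 2 ≤ k) (ε : ℝ) (hε : 0 < ε) :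
    ∃ N₀ : ℕ, ∀ N : ℕ, N₀ ≤ N → |VR (spider k N) 1 - (1 - 1 / (k : ℝ))| < ε := by
  refine ⟨⌈1/ε⌉₊ + 1, fun N hN => ?_⟩
  have hN1 : 0 < N := by omega
  have hx : (2:ℝ) ≤ (k:ℝ) := by exact_mod_cast hk
  have hn1 : (1:ℝ) ≤ (N:ℝ) := by exact_mod_cast hN1
  have hkn : (0:ℝ) < (k:ℝ) * N + 1 := by nlinarith
  have hk0 : (0:ℝ) < (k:ℝ) := by linarith
  have hval : VR (spider k N) 1 = ((k:ℝ) * N + 1 - N) / ((k:ℝ) * N + 1) := by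
    rw [VR, VrSpider.gameValue_one hk hN1, VrSpider.card_spider]
  have key : VR (spider k N) 1 - (1 - 1/(k:ℝ)) = 1 / ((k:ℝ) * ((k:ℝ) * N + 1)) := by
    rw [hval]
    field_simp
    ring
  rw [key, abs_of_pos (by positivity)]
  have h1 : 1 / ((k:ℝ) * ((k:ℝ) * N + 1)) ≤ 1 / (N:ℝ) := by
    apply one_div_le_one_div_of_le (by linarith)
    nlinarith
  have h2 : 1 / (N:ℝ) < ε := by
    have hceil : (1/ε) ≤ (⌈1/ε⌉₊ : ℝ) := Nat.le_ceil _
    have hNc : ((⌈1/ε⌉₊ + 1 : ℕ) : ℝ) ≤ N := by exact_mod_cast hN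
    push_cast at hNc
    have h3 : 1/ε < (N:ℝ) := by linarith
    have h4 := (div_lt_iff₀ hε).mp h3
    rw [div_lt_iff₀ (by linarith : (0:ℝ) < (N:ℝ))]
    linarith
  linarith
end

section
/- Let d ≥ 2 and L ≥ 1 be integers, let H = { x ∈ ℤ^d : 0 ≤ x_i ≤ L for all i, and x₁ + ⋯ + x_d ≥ L }, and let G be the 'grid-connected cycles' graph built from H as follows: each point x ∈ H is replaced by a cycle (ring) of 2d nodes labeled x(1⁺), x(1⁻), x(2⁺), x(2⁻), …, x(d⁺), x(d⁻) in this cyclic order, and for each i ∈ {1,…,d} and each x ∈ H with x + e_i ∈ H (where e_i is the i-th standard unit vector), the node x(i⁺) is joined to (x+e_i)(i⁻) by a path of 6d − 1 edges whose 6d − 2 internal vertices are new. Then for any two ring nodes u = x(p^±) and v = y(q^±) of G, one has 6d·‖x − y‖₁ − 1 ≤ dist_G(u, v) ≤ 6d·‖x − y‖₁ + 5d, where ‖·‖₁ is the L₁ norm on ℤ^d and dist_G denotes graph distance in G. -/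
open SimpleGraph

/-- The cube `{0, …, L}^d` in `ℤ^d` with the corner below the hyperplane
`x₁ + ⋯ + x_d = L` cut off. -/
def cornerCutCube (d L : ℕ) : Set (Fin d → ℤ) :=
  {x | (∀ i, 0 ≤ x i ∧ x i ≤ (L : ℤ)) ∧ (L : ℤ) ≤ ∑ i, x i}

/-- The `i`-th standard unit vector of `ℤ^d`. -/
def unitVec (d : ℕ) (i : Fin d) : Fin d → ℤ := fun j => if j = i then 1 else 0

/-- Index type for the connection paths: a grid point `x ∈ H` together with a direction
`i` such that `x + eᵢ ∈ H`. -/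
abbrev ConnIdx (d L : ℕ) : Type :=
  {q : (Fin d → ℤ) × Fin d //
    q.1 ∈ cornerCutCube d L ∧ q.1 + unitVec d q.2 ∈ cornerCutCube d L}

/-- Vertices of the grid-connected-cycles graph: ring nodes — a grid point of `H`
together with a position on its ring of `2d` nodes, position `2i` being `x(i⁺)` and
position `2i + 1` being `x(i⁻)` (in the cyclic order `1⁺, 1⁻, 2⁺, 2⁻, …`) — plus the
`6d − 2` internal vertices of each connection path. -/
abbrev GCCVertex (d L : ℕ) : Type :=
  (↥(cornerCutCube d L) × Fin (2 * d)) ⊕ (ConnIdx d L × Fin (6 * d - 2))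

/-- Generating relation for the edges of the grid-connected-cycles graph:
ring edges (consecutive positions, cyclically), the edge from `x(i⁺)` to the first
internal vertex of the connection path of `(x, i)`, the `6d − 3` edges between
consecutive internal vertices, and the edge from the last internal vertex to
`(x + eᵢ)(i⁻)`; each connection path thus has `6d − 1` edges. -/
def gccRel (d L : ℕ) : GCCVertex d L → GCCVertex d L → Prop
  | .inl (x, r), .inl (y, s) =>
      x = y ∧ (((r : ℕ) + 1 = (s : ℕ)) ∨ ((r : ℕ) = 2 * d - 1 ∧ (s : ℕ) = 0))
  | .inl (x, r), .inr (⟨⟨z, i⟩, _⟩, k) =>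
      (x : Fin d → ℤ) = z ∧ (r : ℕ) = 2 * (i : ℕ) ∧ (k : ℕ) = 0
  | .inr (⟨⟨z, i⟩, _⟩, k), .inl (y, s) =>
      (y : Fin d → ℤ) = z + unitVec d i ∧ (s : ℕ) = 2 * (i : ℕ) + 1 ∧
        (k : ℕ) = 6 * d - 3
  | .inr (c, k), .inr (c', k') => c = c' ∧ (k : ℕ) + 1 = (k' : ℕ)

/-- The grid-connected-cycles graph over the corner-cut cube. -/
def gccGraph (d L : ℕ) : SimpleGraph (GCCVertex d L) := SimpleGraph.fromRel (gccRel d L)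

/-! ### Lower-bound potential -/

def gccF (d : ℕ) (y z : Fin d → ℤ) : ℤ := ∑ i, |z i - y i|

open Classical in
noncomputable def gccChi (d : ℕ) (y z : Fin d → ℤ) (r : ℕ) : ℤ :=
  if (∃ i : Fin d, (r = 2 * (i : ℕ) ∧ z i < y i) ∨ (r = 2 * (i : ℕ) + 1 ∧ y i < z i))
    then 0 else 1

noncomputable def gccH (d : ℕ) (y z : Fin d → ℤ) (r : ℕ) : ℤ :=
  if z = y then 0 else 6 * d * gccF d y z - 1 + gccChi d y z r

noncomputable def gccPsi (d L : ℕ) (y : Fin d → ℤ) : GCCVertex d L → ℤ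
  | .inl (z, r) => gccH d y z.1 (r : ℕ)
  | .inr (c, k) =>
      min (((k : ℕ) : ℤ) + 1 + gccH d y c.1.1 (2 * (c.1.2 : ℕ)))
        (((6 * d - 2 : ℕ) : ℤ) - ((k : ℕ) : ℤ) +
          gccH d y (c.1.1 + unitVec d c.1.2) (2 * (c.1.2 : ℕ) + 1))

lemma gccF_nonneg (d : ℕ) (y z : Fin d → ℤ) : 0 ≤ gccF d y z :=
  Finset.sum_nonneg fun i _ => abs_nonneg _

lemma gccF_self (d : ℕ) (y : Fin d → ℤ) : gccF d y y = 0 := by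
  simp [gccF]

lemma gccF_pos (d : ℕ) (y z : Fin d → ℤ) (h : z ≠ y) : 1 ≤ gccF d y z := by
  have : ∃ i, z i ≠ y i := by
    by_contra hc
    push_neg at hc
    exact h (funext hc)
  obtain ⟨i, hi⟩ := this
  have h1 : 1 ≤ |z i - y i| := by
    have h2 : z i - y i ≠ 0 := sub_ne_zero.mpr hi
    rcases abs_pos.mpr h2 with h3
    omega
  calc (1 : ℤ) ≤ |z i - y i| := h1
    _ ≤ ∑ j, |z j - y j| :=
      Finset.single_le_sum (f := fun j => |z j - y j|) (fun j _ => abs_nonneg _)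
        (Finset.mem_univ i)

lemma gccChi_nonneg (d : ℕ) (y z : Fin d → ℤ) (r : ℕ) : 0 ≤ gccChi d y z r := by
  unfold gccChi; split <;> norm_num

lemma gccChi_le_one (d : ℕ) (y z : Fin d → ℤ) (r : ℕ) : gccChi d y z r ≤ 1 := by
  unfold gccChi; split <;> norm_num

lemma gccChi_even_zero (d : ℕ) (y z : Fin d → ℤ) (i : Fin d) (h : z i < y i) :
    gccChi d y z (2 * (i : ℕ)) = 0 := by
  unfold gccChi
  rw [if_pos ⟨i, Or.inl ⟨rfl, h⟩⟩]

lemma gccChi_odd_zero (d : ℕ) (y z : Fin d → ℤ) (i : Fin d) (h : y i < z i) :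
    gccChi d y z (2 * (i : ℕ) + 1) = 0 := by
  unfold gccChi
  rw [if_pos ⟨i, Or.inr ⟨rfl, h⟩⟩]

lemma gccChi_even_one (d : ℕ) (y z : Fin d → ℤ) (i : Fin d) (h : ¬ z i < y i) :
    gccChi d y z (2 * (i : ℕ)) = 1 := by
  unfold gccChi
  rw [if_neg]
  rintro ⟨j, (⟨hj, hlt⟩ | ⟨hj, hlt⟩)⟩
  · have : i = j := Fin.ext (by omega)
    exact h (this ▸ hlt)
  · omega

lemma gccChi_odd_one (d : ℕ) (y z : Fin d → ℤ) (i : Fin d) (h : ¬ y i < z i) :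
    gccChi d y z (2 * (i : ℕ) + 1) = 1 := by
  unfold gccChi
  rw [if_neg]
  rintro ⟨j, (⟨hj, hlt⟩ | ⟨hj, hlt⟩)⟩
  · omega
  · have : i = j := Fin.ext (by omega)
    exact h (this ▸ hlt)

lemma gccH_nonneg (d : ℕ) (hd : 1 ≤ d) (y z : Fin d → ℤ) (r : ℕ) :
    0 ≤ gccH d y z r := by
  unfold gccH
  split
  · exact le_refl 0
  · have h1 := gccF_pos d y z (by assumption)
    have h2 := gccChi_nonneg d y z r
    have hd' : (1 : ℤ) ≤ (d : ℤ) := by exact_mod_cast hd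
    nlinarith

lemma unitVec_apply (d : ℕ) (i j : Fin d) :
    (unitVec d i) j = if j = i then 1 else 0 := rfl

lemma add_unit_apply (d : ℕ) (z : Fin d → ℤ) (i j : Fin d) :
    (z + unitVec d i) j = z j + if j = i then 1 else 0 := rfl

lemma add_unit_apply_self (d : ℕ) (z : Fin d → ℤ) (i : Fin d) :
    (z + unitVec d i) i = z i + 1 := by simp [add_unit_apply, unitVec]

lemma abs_succ_sub (a b : ℤ) :
    |a + 1 - b| = |a - b| + (if a < b then -1 else 1) := by
  rcases lt_or_ge a b with h | h
  · rw [if_pos h, abs_of_nonpos (by omega : a + 1 - b ≤ 0),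
      abs_of_neg (by omega : a - b < 0)]
    ring
  · rw [if_neg (not_lt.mpr h), abs_of_nonneg (by omega : (0:ℤ) ≤ a + 1 - b),
      abs_of_nonneg (by omega : (0:ℤ) ≤ a - b)]
    ring

lemma gccF_add_unit (d : ℕ) (y z : Fin d → ℤ) (i : Fin d) :
    gccF d y (z + unitVec d i) = gccF d y z + (if z i < y i then -1 else 1) := by
  unfold gccF
  have h1 : ∀ j : Fin d, |(z + unitVec d i) j - y j|
      = |z j - y j| + (if j = i then (if z i < y i then -1 else 1) else 0) := by
    intro j
    rcases eq_or_ne j i with rfl | hne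
    · rw [add_unit_apply_self, if_pos rfl, abs_succ_sub]
    · rw [add_unit_apply, if_neg hne, if_neg hne, add_zero, add_zero]
  rw [Finset.sum_congr rfl fun j _ => h1 j, Finset.sum_add_distrib,
    Finset.sum_ite_eq' Finset.univ i
      (fun _ => (if z i < y i then (-1 : ℤ) else 1)),
    if_pos (Finset.mem_univ i)]

lemma gcc_cross1 (d : ℕ) (hd : 1 ≤ d) (y z : Fin d → ℤ) (i : Fin d) :
    gccH d y z (2 * (i : ℕ)) ≤ (6 * d - 1 : ℤ) + gccH d y (z + unitVec d i) (2 * (i : ℕ) + 1) := by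
  have hd' : (1 : ℤ) ≤ (d : ℤ) := by exact_mod_cast hd
  by_cases hzy : z = y
  · rw [gccH, if_pos hzy]
    have := gccH_nonneg d hd y (z + unitVec d i) (2 * (i : ℕ) + 1)
    linarith
  · rw [gccH, if_neg hzy]
    have hF := gccF_add_unit d y z i
    rcases lt_or_ge (z i) (y i) with hlt | hge
    · rw [if_pos hlt] at hF
      rw [gccChi_even_zero d y z i hlt]
      by_cases hz'y : z + unitVec d i = y
      · rw [gccH, if_pos hz'y]
        have : gccF d y (z + unitVec d i) = 0 := hz'y ▸ gccF_self d y
        have hFz : gccF d y z = 1 := by omega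
        rw [hFz]; linarith
      · rw [gccH, if_neg hz'y]
        have hchi : gccChi d y (z + unitVec d i) (2 * (i : ℕ) + 1) = 1 := by
          apply gccChi_odd_one
          rw [add_unit_apply_self]
          omega
        rw [hchi]
        have hprod : 6 * (d:ℤ) * gccF d y (z + unitVec d i)
            = 6 * (d:ℤ) * gccF d y z - 6 * (d:ℤ) := by rw [hF]; ring
        linarith
    · rw [if_neg (not_lt.mpr hge)] at hF
      have hz'y : z + unitVec d i ≠ y := by
        intro hc
        have h0 : gccF d y (z + unitVec d i) = 0 := hc ▸ gccF_self d y
        have := gccF_pos d y z hzy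
        omega
      rw [gccH, if_neg hz'y]
      have h1 := gccChi_le_one d y z (2 * (i : ℕ))
      have h2 := gccChi_nonneg d y (z + unitVec d i) (2 * (i : ℕ) + 1)
      have := gccF_pos d y z hzy
      have hprod : 6 * (d:ℤ) * gccF d y (z + unitVec d i)
          = 6 * (d:ℤ) * gccF d y z + 6 * (d:ℤ) := by rw [hF]; ring
      linarith

lemma gcc_cross2 (d : ℕ) (hd : 1 ≤ d) (y z : Fin d → ℤ) (i : Fin d) :
    gccH d y (z + unitVec d i) (2 * (i : ℕ) + 1) ≤ (6 * d - 1 : ℤ) + gccH d y z (2 * (i : ℕ)) := by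
  have hd' : (1 : ℤ) ≤ (d : ℤ) := by exact_mod_cast hd
  by_cases hz'y : z + unitVec d i = y
  · rw [gccH, if_pos hz'y]
    have := gccH_nonneg d hd y z (2 * (i : ℕ))
    linarith
  · rw [gccH, if_neg hz'y]
    have hF := gccF_add_unit d y z i
    rcases lt_or_ge (z i) (y i) with hlt | hge
    · -- moving toward y: z' is closer
      rw [if_pos hlt] at hF
      have hzy : z ≠ y := by
        intro hc
        have h0 : gccF d y z = 0 := hc ▸ gccF_self d y
        have := gccF_nonneg d y (z + unitVec d i)
        omega
      rw [gccH, if_neg hzy]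
      have h1 := gccChi_le_one d y (z + unitVec d i) (2 * (i : ℕ) + 1)
      have h2 := gccChi_nonneg d y z (2 * (i : ℕ))
      have h3 := gccF_pos d y (z + unitVec d i) hz'y
      have hprod : 6 * (d:ℤ) * gccF d y (z + unitVec d i)
          = 6 * (d:ℤ) * gccF d y z - 6 * (d:ℤ) := by rw [hF]; ring
      linarith
    · rw [if_neg (not_lt.mpr hge)] at hF
      have hchi' : gccChi d y (z + unitVec d i) (2 * (i : ℕ) + 1) = 0 := by
        apply gccChi_odd_zero
        rw [add_unit_apply_self]
        omega
      rw [hchi']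
      by_cases hzy : z = y
      · rw [gccH, if_pos hzy]
        have h0 : gccF d y z = 0 := hzy ▸ gccF_self d y
        have hF1 : gccF d y (z + unitVec d i) = 1 := by omega
        rw [hF1]
        linarith
      · rw [gccH, if_neg hzy]
        have hchi : gccChi d y z (2 * (i : ℕ)) = 1 :=
          gccChi_even_one d y z i (not_lt.mpr hge)
        rw [hchi]
        have hprod : 6 * (d:ℤ) * gccF d y (z + unitVec d i)
            = 6 * (d:ℤ) * gccF d y z + 6 * (d:ℤ) := by rw [hF]; ring
        linarith

lemma gcc_key (d L : ℕ) (hd : 1 ≤ d) (y : Fin d → ℤ) (u v : GCCVertex d L)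
    (h : gccRel d L u v) :
    gccPsi d L y u ≤ gccPsi d L y v + 1 ∧ gccPsi d L y v ≤ gccPsi d L y u + 1 := by
  have hc1 : ((6 * d - 2 : ℕ) : ℤ) = 6 * (d : ℤ) - 2 := by omega
  have hc2 : ((6 * d - 3 : ℕ) : ℤ) = 6 * (d : ℤ) - 3 := by omega
  rcases u with ⟨z, r⟩ | ⟨⟨⟨zc, ic⟩, hcc⟩, k⟩ <;>
    rcases v with ⟨z', s⟩ | ⟨⟨⟨zc', ic'⟩, hcc'⟩, k'⟩
  · -- ring-ring
    obtain ⟨rfl, -⟩ := h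
    show gccH d y z.1 (r:ℕ) ≤ gccH d y z.1 (s:ℕ) + 1 ∧
      gccH d y z.1 (s:ℕ) ≤ gccH d y z.1 (r:ℕ) + 1
    unfold gccH
    split
    · omega
    · have a1 := gccChi_nonneg d y z.1 (r : ℕ)
      have a2 := gccChi_le_one d y z.1 (r : ℕ)
      have a3 := gccChi_nonneg d y z.1 (s : ℕ)
      have a4 := gccChi_le_one d y z.1 (s : ℕ)
      omega
  · -- ring to internal
    obtain ⟨hz, hr, hk⟩ := h
    have key := gcc_cross1 d hd y zc' ic'
    show gccH d y z.1 (r : ℕ) ≤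
        min (((k' : ℕ) : ℤ) + 1 + gccH d y zc' (2 * (ic' : ℕ)))
          (((6 * d - 2 : ℕ) : ℤ) - ((k' : ℕ) : ℤ) +
            gccH d y (zc' + unitVec d ic') (2 * (ic' : ℕ) + 1)) + 1 ∧
      min (((k' : ℕ) : ℤ) + 1 + gccH d y zc' (2 * (ic' : ℕ)))
          (((6 * d - 2 : ℕ) : ℤ) - ((k' : ℕ) : ℤ) +
            gccH d y (zc' + unitVec d ic') (2 * (ic' : ℕ) + 1)) ≤
        gccH d y z.1 (r : ℕ) + 1
    rw [hz, hr, hk]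
    omega
  · -- internal to ring
    obtain ⟨hz, hs, hk⟩ := h
    have key := gcc_cross2 d hd y zc ic
    show min (((k : ℕ) : ℤ) + 1 + gccH d y zc (2 * (ic : ℕ)))
          (((6 * d - 2 : ℕ) : ℤ) - ((k : ℕ) : ℤ) +
            gccH d y (zc + unitVec d ic) (2 * (ic : ℕ) + 1)) ≤
        gccH d y z'.1 (s : ℕ) + 1 ∧
      gccH d y z'.1 (s : ℕ) ≤
        min (((k : ℕ) : ℤ) + 1 + gccH d y zc (2 * (ic : ℕ)))
          (((6 * d - 2 : ℕ) : ℤ) - ((k : ℕ) : ℤ) +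
            gccH d y (zc + unitVec d ic) (2 * (ic : ℕ) + 1)) + 1
    rw [hz, hs, hk]
    omega
  · -- internal-internal
    obtain ⟨hcc'', hk⟩ := h
    have hzz : zc = zc' := congrArg (fun c => c.1.1) hcc''
    subst hzz
    have hii : ic = ic' := congrArg (fun c => c.1.2) hcc''
    subst hii
    show min (((k : ℕ) : ℤ) + 1 + gccH d y zc (2 * (ic : ℕ)))
          (((6 * d - 2 : ℕ) : ℤ) - ((k : ℕ) : ℤ) +
            gccH d y (zc + unitVec d ic) (2 * (ic : ℕ) + 1)) ≤
        min (((k' : ℕ) : ℤ) + 1 + gccH d y zc (2 * (ic : ℕ)))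
          (((6 * d - 2 : ℕ) : ℤ) - ((k' : ℕ) : ℤ) +
            gccH d y (zc + unitVec d ic) (2 * (ic : ℕ) + 1)) + 1 ∧
      min (((k' : ℕ) : ℤ) + 1 + gccH d y zc (2 * (ic : ℕ)))
          (((6 * d - 2 : ℕ) : ℤ) - ((k' : ℕ) : ℤ) +
            gccH d y (zc + unitVec d ic) (2 * (ic : ℕ) + 1)) ≤
        min (((k : ℕ) : ℤ) + 1 + gccH d y zc (2 * (ic : ℕ)))
          (((6 * d - 2 : ℕ) : ℤ) - ((k : ℕ) : ℤ) +
            gccH d y (zc + unitVec d ic) (2 * (ic : ℕ) + 1)) + 1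
    omega

lemma gcc_psi_le_aux (d L : ℕ) (hd : 1 ≤ d) (y : Fin d → ℤ)
    (t : GCCVertex d L) (ht : gccPsi d L y t ≤ 0) :
    ∀ (v : GCCVertex d L) (w : (gccGraph d L).Walk v t),
      gccPsi d L y v ≤ (w.length : ℤ) := by
  intro v w
  induction w with
  | nil => simpa using ht
  | @cons a b c hab w ih =>
    rw [gccGraph, fromRel_adj] at hab
    have hle : gccPsi d L y a ≤ gccPsi d L y b + 1 := by
      rcases hab.2 with h | h
      · exact (gcc_key d L hd y a b h).1
      · exact (gcc_key d L hd y b a h).2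
    rw [SimpleGraph.Walk.length_cons]
    push_cast
    omega

lemma gcc_psi_le_length (d L : ℕ) (hd : 1 ≤ d) (yv : ↥(cornerCutCube d L))
    (q : Fin (2 * d)) (v : GCCVertex d L)
    (w : (gccGraph d L).Walk v (Sum.inl (yv, q))) :
    gccPsi d L yv.1 v ≤ (w.length : ℤ) := by
  apply gcc_psi_le_aux d L hd yv.1 _ _ v w
  show gccH d yv.1 yv.1 (q : ℕ) ≤ 0
  rw [gccH, if_pos rfl]

/-! ### Upper bound: walk constructions -/

def gccWB (d L : ℕ) (u v : GCCVertex d L) (n : ℕ) : Prop :=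
  ∃ w : (gccGraph d L).Walk u v, w.length ≤ n

lemma gccWB.refl (d L : ℕ) (u : GCCVertex d L) : gccWB d L u u 0 :=
  ⟨SimpleGraph.Walk.nil, le_refl 0⟩

lemma gccWB.ofAdj {d L : ℕ} {u v : GCCVertex d L} (h : (gccGraph d L).Adj u v) :
    gccWB d L u v 1 := ⟨h.toWalk, by simp⟩

lemma gccWB.trans {d L : ℕ} {u v w : GCCVertex d L} {m n : ℕ}
    (h1 : gccWB d L u v m) (h2 : gccWB d L v w n) : gccWB d L u w (m + n) := by
  obtain ⟨w1, hw1⟩ := h1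
  obtain ⟨w2, hw2⟩ := h2
  exact ⟨w1.append w2, by rw [SimpleGraph.Walk.length_append]; omega⟩

lemma gccWB.mono {d L : ℕ} {u v : GCCVertex d L} {m n : ℕ}
    (h : gccWB d L u v m) (hmn : m ≤ n) : gccWB d L u v n := by
  obtain ⟨w1, hw1⟩ := h
  exact ⟨w1, le_trans hw1 hmn⟩

lemma gccWB.symm {d L : ℕ} {u v : GCCVertex d L} {m : ℕ}
    (h : gccWB d L u v m) : gccWB d L v u m := by
  obtain ⟨w1, hw1⟩ := h
  exact ⟨w1.reverse, by rw [SimpleGraph.Walk.length_reverse]; omega⟩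

def gccPos (d : ℕ) (hd : 0 < d) (m : ℕ) : Fin (2 * d) :=
  ⟨m % (2 * d), Nat.mod_lt _ (by omega)⟩

lemma gccPos_val (d : ℕ) (hd : 0 < d) (m : ℕ) :
    ((gccPos d hd m : Fin (2 * d)) : ℕ) = m % (2 * d) := rfl

lemma gccPos_eq (d : ℕ) (hd : 0 < d) {m m' : ℕ} (h : m % (2 * d) = m' % (2 * d)) :
    gccPos d hd m = gccPos d hd m' := Fin.ext h

lemma gccPos_add_cycle (d : ℕ) (hd : 0 < d) (m : ℕ) :
    gccPos d hd (m + 2 * d) = gccPos d hd m :=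
  gccPos_eq d hd (by rw [Nat.add_mod_right])

lemma succ_mod_cases (n m : ℕ) (hn : 0 < n) :
    ((m + 1) % n = m % n + 1 ∧ m % n + 1 < n) ∨ ((m + 1) % n = 0 ∧ m % n = n - 1) := by
  have h1 : (m + 1) % n = (m % n + 1 % n) % n := Nat.add_mod m 1 n
  have h2 : m % n < n := Nat.mod_lt _ hn
  rcases Nat.lt_or_ge (m % n + 1) n with h3 | h3
  · left
    rcases Nat.eq_or_lt_of_le hn with h4 | h4
    · omega
    · have h5 : 1 % n = 1 := Nat.mod_eq_of_lt h4
      rw [h1, h5, Nat.mod_eq_of_lt h3]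
      omega
  · right
    have h6 : m % n = n - 1 := by omega
    rcases Nat.eq_or_lt_of_le hn with h4 | h4
    · simp [← h4] at *
      omega
    · have h5 : 1 % n = 1 := Nat.mod_eq_of_lt h4
      rw [h1, h5, h6]
      have : n - 1 + 1 = n := by omega
      rw [this, Nat.mod_self]
      omega

lemma gcc_adj_ringF (d L : ℕ) (hd : 0 < d) (z : ↥(cornerCutCube d L)) (m : ℕ) :
    (gccGraph d L).Adj (.inl (z, gccPos d hd m)) (.inl (z, gccPos d hd (m + 1))) := by
  have hcases := succ_mod_cases (2 * d) m (by omega)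
  rw [gccGraph, fromRel_adj]
  constructor
  · intro hc
    have h2 : gccPos d hd m = gccPos d hd (m + 1) := by
      have := Sum.inl.inj hc
      exact (Prod.mk.injEq _ _ _ _ ▸ this).2
    have h3 := congrArg Fin.val h2
    rw [gccPos_val, gccPos_val] at h3
    omega
  · left
    refine ⟨rfl, ?_⟩
    rw [gccPos_val, gccPos_val]
    omega

lemma gcc_wb_ringF (d L : ℕ) (hd : 0 < d) (z : ↥(cornerCutCube d L)) (m t : ℕ) :
    gccWB d L (.inl (z, gccPos d hd m)) (.inl (z, gccPos d hd (m + t))) t := by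
  induction t with
  | zero => exact gccWB.refl d L _
  | succ t ih =>
    have := ih.trans (gccWB.ofAdj (gcc_adj_ringF d L hd z (m + t)))
    exact this

lemma gcc_wb_ringB (d L : ℕ) (hd : 0 < d) (z : ↥(cornerCutCube d L)) (m t : ℕ) :
    gccWB d L (.inl (z, gccPos d hd (m + t))) (.inl (z, gccPos d hd m)) t :=
  (gcc_wb_ringF d L hd z m t).symm

/-- From any ring position to any other within `d` steps. -/
lemma gcc_wb_ring_any (d L : ℕ) (hd : 0 < d) (z : ↥(cornerCutCube d L))
    (r s : Fin (2 * d)) : gccWB d L (.inl (z, r)) (.inl (z, s)) d := by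
  have hr : r = gccPos d hd (r : ℕ) := Fin.ext (Nat.mod_eq_of_lt r.isLt).symm
  have hs : s = gccPos d hd (s : ℕ) := Fin.ext (Nat.mod_eq_of_lt s.isLt).symm
  rw [hr, hs]
  set a := (r : ℕ)
  set b := (s : ℕ)
  have hb : b < 2 * d := s.isLt
  have ha : a < 2 * d := r.isLt
  rcases le_or_gt a b with hab | hab
  · rcases le_or_gt (b - a) d with hf | hf
    · have := gcc_wb_ringF d L hd z a (b - a)
      rw [(by omega : a + (b - a) = b)] at this
      exact this.mono hf
    · -- backward, t = 2d - (b - a)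
      have := gcc_wb_ringB d L hd z b (2 * d - (b - a))
      rw [(by omega : b + (2 * d - (b - a)) = a + 2 * d), gccPos_add_cycle] at this
      exact this.mono (by omega)
  · rcases le_or_gt (2 * d - (a - b)) d with hf | hf
    · have := gcc_wb_ringF d L hd z a (2 * d - (a - b))
      rw [(by omega : a + (2 * d - (a - b)) = b + 2 * d), gccPos_add_cycle] at this
      exact this.mono hf
    · have := gcc_wb_ringB d L hd z b (a - b)
      rw [(by omega : b + (a - b) = a)] at this
      exact this.mono (by omega)

/-! ### Connection-path traversal -/

lemma gcc_wb_chain (d L : ℕ) (hd : 2 ≤ d) (c : ConnIdx d L) (k : ℕ) (hk : k < 6 * d - 2) :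
    gccWB d L (.inr (c, ⟨0, by omega⟩)) (.inr (c, ⟨k, hk⟩)) k := by
  induction k with
  | zero => exact gccWB.refl d L _
  | succ k ih =>
    refine (ih (by omega)).trans (gccWB.ofAdj ?_)
    rw [gccGraph, fromRel_adj]
    refine ⟨?_, Or.inl ?_⟩
    · intro hc
      have h2 := Sum.inr.inj hc
      have h3 := congrArg (fun p => (p.2 : ℕ)) h2
      simp at h3
    · obtain ⟨⟨zc, ic⟩, hcc⟩ := c
      exact ⟨rfl, rfl⟩

lemma gcc_wb_traverse_up (d L : ℕ) (hd : 2 ≤ d) (z : Fin d → ℤ) (i : Fin d)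
    (hz : z ∈ cornerCutCube d L) (hz' : z + unitVec d i ∈ cornerCutCube d L) :
    gccWB d L (.inl (⟨z, hz⟩, gccPos d (by omega) (2 * (i : ℕ))))
      (.inl (⟨z + unitVec d i, hz'⟩, gccPos d (by omega) (2 * (i : ℕ) + 1)))
      (6 * d - 1) := by
  set c : ConnIdx d L := ⟨(z, i), hz, hz'⟩ with hc
  have h2i : 2 * (i : ℕ) < 2 * d := by have := i.isLt; omega
  have step1 : (gccGraph d L).Adj (.inl (⟨z, hz⟩, gccPos d (by omega) (2 * (i : ℕ))))
      (.inr (c, ⟨0, by omega⟩)) := by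
    rw [gccGraph, fromRel_adj]
    refine ⟨by simp, Or.inl ?_⟩
    exact ⟨rfl, by rw [gccPos_val]; exact Nat.mod_eq_of_lt h2i, rfl⟩
  have step2 : (gccGraph d L).Adj (.inr (c, ⟨6 * d - 3, by omega⟩))
      (.inl (⟨z + unitVec d i, hz'⟩, gccPos d (by omega) (2 * (i : ℕ) + 1))) := by
    rw [gccGraph, fromRel_adj]
    refine ⟨by simp, Or.inl ?_⟩
    exact ⟨rfl, by rw [gccPos_val]; exact Nat.mod_eq_of_lt (by omega), rfl⟩
  have chain := gcc_wb_chain d L hd c (6 * d - 3) (by omega)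
  have total := ((gccWB.ofAdj step1).trans chain).trans (gccWB.ofAdj step2)
  exact total.mono (by omega)

/-! ### Membership helpers -/

lemma gcc_mem_up (d L : ℕ) (z : Fin d → ℤ) (a : Fin d → ℕ)
    (hz : z ∈ cornerCutCube d L) (ha : ∀ i, z i + (a i : ℤ) ≤ (L : ℤ)) :
    (fun j => z j + (a j : ℤ)) ∈ cornerCutCube d L := by
  obtain ⟨h1, h2⟩ := hz
  refine ⟨fun i => ⟨?_, ?_⟩, ?_⟩
  · show (0:ℤ) ≤ z i + (a i : ℤ)
    have := (h1 i).1
    omega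
  · exact ha i
  · calc (L : ℤ) ≤ ∑ i, z i := h2
      _ ≤ ∑ i, (z i + (a i : ℤ)) := by
        apply Finset.sum_le_sum
        intro i _
        show z i ≤ z i + (a i : ℤ)
        omega

lemma gcc_mem_succ (d L : ℕ) (z : Fin d → ℤ) (i : Fin d)
    (hz : z ∈ cornerCutCube d L) (hb : z i + 1 ≤ (L : ℤ)) :
    z + unitVec d i ∈ cornerCutCube d L := by
  obtain ⟨h1, h2⟩ := hz
  constructor
  · intro j
    rw [add_unit_apply]
    rcases eq_or_ne j i with rfl | hne
    · rw [if_pos rfl]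
      exact ⟨by have := (h1 j).1; omega, hb⟩
    · rw [if_neg hne]
      exact ⟨by have := (h1 j).1; omega, by have := (h1 j).2; omega⟩
  · calc (L : ℤ) ≤ ∑ j, z j := h2
      _ ≤ ∑ j, (z + unitVec d i) j := by
        apply Finset.sum_le_sum
        intro j _
        rw [add_unit_apply]
        split <;> omega

/-! ### Blocks -/

lemma gcc_up_block (d L : ℕ) (hd : 2 ≤ d) : ∀ (a : ℕ), 0 < a →
    ∀ (z : Fin d → ℤ) (i : Fin d) (hz : z ∈ cornerCutCube d L)
    (hb : z i + (a : ℤ) ≤ (L : ℤ))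
    (hmem : (fun j => z j + if j = i then (a : ℤ) else 0) ∈ cornerCutCube d L),
    gccWB d L (.inl (⟨z, hz⟩, gccPos d (by omega) (2 * (i : ℕ))))
      (.inl (⟨fun j => z j + if j = i then (a : ℤ) else 0, hmem⟩,
        gccPos d (by omega) (2 * (i : ℕ) + 1)))
      (6 * d * a) := by
  intro a
  induction a with
  | zero => omega
  | succ a ih =>
    intro _ z i hz hb hmem
    have hz' : z + unitVec d i ∈ cornerCutCube d L :=
      gcc_mem_succ d L z i hz (by push_cast at hb ⊢; omega)
    rcases Nat.eq_zero_or_pos a with rfl | hpos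
    · -- single traversal
      have h1 := gcc_wb_traverse_up d L hd z i hz hz'
      have hfun : (⟨z + unitVec d i, hz'⟩ : ↥(cornerCutCube d L)) =
          ⟨fun j => z j + if j = i then ((0 + 1 : ℕ) : ℤ) else 0, hmem⟩ := by
        apply Subtype.ext
        show z + unitVec d i = fun j => z j + if j = i then ((0 + 1 : ℕ) : ℤ) else 0
        funext j
        rw [add_unit_apply]
        split <;> norm_num
      rw [hfun] at h1
      exact h1.mono (by omega)

    · -- traverse, step back, recurse
      have h1 := gcc_wb_traverse_up d L hd z i hz hz'
      -- back-step from 2i+1 to 2i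
      have hback : gccWB d L (.inl ((⟨z + unitVec d i, hz'⟩ : ↥(cornerCutCube d L)),
            gccPos d (by omega) (2 * (i : ℕ) + 1)))
          (.inl (⟨z + unitVec d i, hz'⟩, gccPos d (by omega) (2 * (i : ℕ)))) 1 :=
        (gccWB.ofAdj (gcc_adj_ringF d L (by omega) _ (2 * (i : ℕ)))).symm
      have hbrec : (z + unitVec d i) i + (a : ℤ) ≤ (L : ℤ) := by
        rw [add_unit_apply_self]
        push_cast at hb ⊢
        omega
      have hmem' : (fun j => (z + unitVec d i) j + if j = i then (a : ℤ) else 0)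
          ∈ cornerCutCube d L := by
        have : (fun j => (z + unitVec d i) j + if j = i then (a : ℤ) else 0)
            = fun j => z j + if j = i then ((a : ℤ) + 1) else 0 := by
          funext j
          rw [add_unit_apply]
          split <;> ring
        rw [this]
        have : (fun j => z j + if j = i then ((a : ℤ) + 1) else 0)
            = fun j => z j + if j = i then (((a + 1 : ℕ)) : ℤ) else 0 := by
          funext j; split <;> push_cast <;> ring
        rw [this]
        exact hmem
      have h2 := ih hpos (z + unitVec d i) i hz' hbrec hmem'
      have hfun : (⟨fun j => (z + unitVec d i) j + if j = i then (a : ℤ) else 0, hmem'⟩ :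
          ↥(cornerCutCube d L)) =
          ⟨fun j => z j + if j = i then (((a + 1 : ℕ)) : ℤ) else 0, hmem⟩ := by
        apply Subtype.ext
        show (fun j => (z + unitVec d i) j + if j = i then (a : ℤ) else 0)
            = fun j => z j + if j = i then (((a + 1 : ℕ)) : ℤ) else 0
        funext j
        rw [add_unit_apply]
        split <;> push_cast <;> ring
      rw [hfun] at h2
      have htot := (h1.trans hback).trans h2
      apply htot.mono
      have e1 : 6 * d - 1 + 1 = 6 * d := by omega
      rw [e1]
      exact Nat.le_of_eq (by ring)

/-! ### Downward traversal and block -/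

lemma gcc_mem_pred (d L : ℕ) (z : Fin d → ℤ) (i : Fin d)
    (hz : z ∈ cornerCutCube d L) (h1 : 1 ≤ z i) (h2 : (L : ℤ) + 1 ≤ ∑ j, z j) :
    (fun j => z j - if j = i then (1:ℤ) else 0) ∈ cornerCutCube d L := by
  obtain ⟨hc, hs⟩ := hz
  refine ⟨fun j => ?_, ?_⟩
  · have := (hc j).1
    have := (hc j).2
    constructor
    · show (0:ℤ) ≤ z j - if j = i then (1:ℤ) else 0
      split_ifs with hji
      · subst hji; omega
      · omega
    · show z j - (if j = i then (1:ℤ) else 0) ≤ (L:ℤ)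
      split_ifs <;> omega
  · have key : ∑ j, (z j - if j = i then (1:ℤ) else 0) = (∑ j, z j) - 1 := by
      rw [Finset.sum_sub_distrib, Finset.sum_ite_eq' Finset.univ i (fun _ => (1:ℤ)),
        if_pos (Finset.mem_univ i)]
    show (L:ℤ) ≤ ∑ j, (z j - if j = i then (1:ℤ) else 0)
    omega

lemma gcc_wb_traverse_down (d L : ℕ) (hd : 2 ≤ d) (z : Fin d → ℤ) (i : Fin d)
    (hz : z ∈ cornerCutCube d L) (h1 : 1 ≤ z i) (h2 : (L : ℤ) + 1 ≤ ∑ j, z j)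
    (hmem : (fun j => z j - if j = i then (1:ℤ) else 0) ∈ cornerCutCube d L) :
    gccWB d L (.inl (⟨z, hz⟩, gccPos d (by omega) (2 * (i : ℕ) + 1)))
      (.inl (⟨fun j => z j - if j = i then (1:ℤ) else 0, hmem⟩,
        gccPos d (by omega) (2 * (i : ℕ))))
      (6 * d - 1) := by
  set z' : Fin d → ℤ := fun j => z j - if j = i then (1:ℤ) else 0 with hz'def
  have hup : z' + unitVec d i = z := by
    funext j
    rw [add_unit_apply]
    show z j - (if j = i then (1:ℤ) else 0) + (if j = i then (1:ℤ) else 0) = z j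
    ring
  have hz'' : z' + unitVec d i ∈ cornerCutCube d L := by rw [hup]; exact hz
  have h := gcc_wb_traverse_up d L hd z' i hmem hz''
  have heq : (⟨z' + unitVec d i, hz''⟩ : ↥(cornerCutCube d L)) = ⟨z, hz⟩ :=
    Subtype.ext hup
  rw [heq] at h
  exact h.symm

lemma gcc_down_block (d L : ℕ) (hd : 2 ≤ d) : ∀ (b : ℕ), 0 < b →
    ∀ (z : Fin d → ℤ) (i : Fin d) (hz : z ∈ cornerCutCube d L)
    (h1 : (b : ℤ) ≤ z i) (h2 : (L : ℤ) + (b : ℤ) ≤ ∑ j, z j)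
    (hmem : (fun j => z j - if j = i then (b : ℤ) else 0) ∈ cornerCutCube d L),
    gccWB d L (.inl (⟨z, hz⟩, gccPos d (by omega) (2 * (i : ℕ) + 1)))
      (.inl (⟨fun j => z j - if j = i then (b : ℤ) else 0, hmem⟩,
        gccPos d (by omega) (2 * (i : ℕ))))
      (6 * d * b) := by
  intro b
  induction b with
  | zero => omega
  | succ b ih =>
    intro _ z i hz h1 h2 hmem
    have hm1 : (fun j => z j - if j = i then (1:ℤ) else 0) ∈ cornerCutCube d L := by
      apply gcc_mem_pred d L z i hz (by push_cast at h1; omega)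
      push_cast at h2; omega
    have hstep := gcc_wb_traverse_down d L hd z i hz (by push_cast at h1; omega)
      (by push_cast at h2; omega) hm1
    rcases Nat.eq_zero_or_pos b with rfl | hpos
    · have hfun : (⟨fun j => z j - if j = i then (1:ℤ) else 0, hm1⟩ :
          ↥(cornerCutCube d L)) =
          ⟨fun j => z j - if j = i then (((0:ℕ) + 1 : ℕ) : ℤ) else 0, hmem⟩ := by
        apply Subtype.ext
        show (fun j => z j - if j = i then (1:ℤ) else 0)
            = fun j => z j - if j = i then (((0:ℕ) + 1 : ℕ) : ℤ) else 0
        funext j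
        split <;> norm_num
      rw [hfun] at hstep
      exact hstep.mono (by omega)
    · -- step down, ring forward 1, recurse
      set z1 : Fin d → ℤ := fun j => z j - if j = i then (1:ℤ) else 0 with hz1
      have hfwd : gccWB d L (.inl ((⟨z1, hm1⟩ : ↥(cornerCutCube d L)),
            gccPos d (by omega) (2 * (i : ℕ))))
          (.inl (⟨z1, hm1⟩, gccPos d (by omega) (2 * (i : ℕ) + 1))) 1 :=
        gccWB.ofAdj (gcc_adj_ringF d L (by omega) _ (2 * (i : ℕ)))
      have hs1 : ∑ j, z1 j = (∑ j, z j) - 1 := by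
        rw [hz1, Finset.sum_sub_distrib,
          Finset.sum_ite_eq' Finset.univ i (fun _ => (1:ℤ)),
          if_pos (Finset.mem_univ i)]
      have hz1i : z1 i = z i - 1 := by
        show z i - (if i = i then (1:ℤ) else 0) = z i - 1
        rw [if_pos rfl]
      have hmem' : (fun j => z1 j - if j = i then (b : ℤ) else 0) ∈ cornerCutCube d L := by
        have : (fun j => z1 j - if j = i then (b : ℤ) else 0)
            = fun j => z j - if j = i then (((b + 1 : ℕ)) : ℤ) else 0 := by
          funext j
          show z j - (if j = i then (1:ℤ) else 0) - _ = _
          split <;> push_cast <;> ring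
        rw [this]
        exact hmem
      have hrec := ih hpos z1 i hm1 (by push_cast at h1 ⊢; omega)
        (by rw [hs1]; push_cast at h2 ⊢; omega) hmem'
      have hfun : (⟨fun j => z1 j - if j = i then (b : ℤ) else 0, hmem'⟩ :
          ↥(cornerCutCube d L)) =
          ⟨fun j => z j - if j = i then (((b + 1 : ℕ)) : ℤ) else 0, hmem⟩ := by
        apply Subtype.ext
        show (fun j => z1 j - if j = i then (b : ℤ) else 0)
            = fun j => z j - if j = i then (((b + 1 : ℕ)) : ℤ) else 0
        funext j
        show z j - (if j = i then (1:ℤ) else 0) - _ = _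
        split <;> push_cast <;> ring
      rw [hfun] at hrec
      have htot := (hstep.trans hfwd).trans hrec
      apply htot.mono
      have e1 : 6 * d - 1 + 1 = 6 * d := by omega
      rw [e1]
      exact Nat.le_of_eq (by ring)

/-! ### The two sweep loops -/

lemma gcc_up_loop (d L : ℕ) (hd : 2 ≤ d) : ∀ (t : ℕ) (m₀ : ℕ) (z : Fin d → ℤ)
    (a : Fin d → ℕ) (hz : z ∈ cornerCutCube d L)
    (ha : ∀ i, z i + (a i : ℤ) ≤ (L : ℤ))
    (hsup : ∀ i : Fin d, 0 < a i → ∃ s, s < t ∧ (m₀ + s) % (2 * d) = 2 * (i : ℕ)),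
    gccWB d L (.inl (⟨z, hz⟩, gccPos d (by omega) m₀))
      (.inl (⟨fun j => z j + ((a j : ℕ) : ℤ), gcc_mem_up d L z a hz ha⟩,
        gccPos d (by omega) (m₀ + t)))
      (6 * d * (∑ i, a i) + t) := by
  intro t
  induction t with
  | zero =>
    intro m₀ z a hz ha hsup
    have ha0 : ∀ i, a i = 0 := by
      intro i
      by_contra hc
      obtain ⟨s, hs, -⟩ := hsup i (by omega)
      omega
    have hfun : (⟨fun j => z j + ((a j : ℕ) : ℤ), gcc_mem_up d L z a hz ha⟩ :
        ↥(cornerCutCube d L)) = ⟨z, hz⟩ := by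
      apply Subtype.ext
      show (fun j => z j + ((a j : ℕ) : ℤ)) = z
      funext j
      rw [ha0 j]
      norm_num
    rw [hfun]
    exact (gccWB.refl d L _).mono (by omega)
  | succ t ih =>
    intro m₀ z a hz ha hsup
    by_cases hcase : ∃ i : Fin d, (m₀ % (2 * d) = 2 * (i : ℕ) ∧ 0 < a i)
    · obtain ⟨i, hi1, hi2⟩ := hcase
      have h2i : 2 * (i : ℕ) < 2 * d := by have := i.isLt; omega
      -- the block
      have hmemz' : (fun j => z j + if j = i then ((a i : ℕ) : ℤ) else 0)
          ∈ cornerCutCube d L := by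
        have e : (fun j => z j + if j = i then ((a i : ℕ) : ℤ) else 0)
            = fun j => z j + (((if j = i then a i else 0 : ℕ)) : ℤ) := by
          funext j; split <;> norm_num
        rw [e]
        apply gcc_mem_up d L z _ hz
        intro j
        split_ifs with hji
        · subst hji; exact ha j
        · have := ha j; push_cast at this ⊢; omega
      have hblock := gcc_up_block d L hd (a i) hi2 z i hz (ha i) hmemz'
      have hp1 : gccPos d (by omega : 0 < d) m₀ = gccPos d (by omega) (2 * (i : ℕ)) :=
        gccPos_eq d (by omega) (hi1.trans (Nat.mod_eq_of_lt h2i).symm)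
      have hp2 : gccPos d (by omega : 0 < d) (2 * (i : ℕ) + 1) =
          gccPos d (by omega) (m₀ + 1) := by
        apply gccPos_eq
        rcases succ_mod_cases (2 * d) m₀ (by omega) with ⟨e1, e2⟩ | ⟨e1, e2⟩
        · rw [e1, hi1, Nat.mod_eq_of_lt (by omega)]
        · omega
      rw [hp1]
      -- IH data
      set a' := Function.update a i 0 with ha'def
      set z' : Fin d → ℤ := fun j => z j + if j = i then ((a i : ℕ) : ℤ) else 0
        with hz'def
      have ha' : ∀ j, z' j + ((a' j : ℕ) : ℤ) ≤ (L : ℤ) := by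
        intro j
        show z j + (if j = i then ((a i : ℕ) : ℤ) else 0) + _ ≤ _
        rcases eq_or_ne j i with rfl | hne
        · rw [if_pos rfl, ha'def, Function.update_self]
          have := ha j; push_cast at this ⊢; omega
        · rw [if_neg hne, ha'def, Function.update_of_ne hne]
          have := ha j; push_cast at this ⊢; omega
      have hsup' : ∀ j : Fin d, 0 < a' j →
          ∃ s, s < t ∧ (m₀ + 1 + s) % (2 * d) = 2 * (j : ℕ) := by
        intro j hj
        have hne : j ≠ i := by
          intro hc
          rw [hc, ha'def, Function.update_self] at hj
          omega
        have hja : 0 < a j := by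
          rw [ha'def, Function.update_of_ne hne] at hj
          exact hj
        obtain ⟨s, hs, hmod⟩ := hsup j hja
        have hs0 : s ≠ 0 := by
          intro hc
          rw [hc, Nat.add_zero] at hmod
          exact hne (Fin.ext (by omega : (j : ℕ) = (i : ℕ)))
        refine ⟨s - 1, by omega, ?_⟩
        have : m₀ + 1 + (s - 1) = m₀ + s := by omega
        rw [this]
        exact hmod
      have hrec := ih (m₀ + 1) z' a' hmemz' ha' hsup'
      have hfun : (⟨fun j => z' j + ((a' j : ℕ) : ℤ), gcc_mem_up d L z' a' hmemz' ha'⟩ :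
          ↥(cornerCutCube d L)) =
          ⟨fun j => z j + ((a j : ℕ) : ℤ), gcc_mem_up d L z a hz ha⟩ := by
        apply Subtype.ext
        show (fun j => z' j + ((a' j : ℕ) : ℤ)) = fun j => z j + ((a j : ℕ) : ℤ)
        funext j
        show z j + (if j = i then ((a i : ℕ) : ℤ) else 0) + _ = _
        rcases eq_or_ne j i with rfl | hne
        · rw [if_pos rfl, ha'def, Function.update_self]
          push_cast
          ring
        · rw [if_neg hne, ha'def, Function.update_of_ne hne]
          push_cast
          ring
      have hidx : m₀ + 1 + t = m₀ + (t + 1) := by omega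
      rw [hfun, hidx] at hrec
      rw [hp2] at hblock
      have htot := hblock.trans hrec
      apply htot.mono
      have hsum : ∑ j, a j = a i + ∑ j, a' j := by
        have h1 : ∑ j, a' j = 0 + ∑ j ∈ Finset.univ \ {i}, a j := by
          rw [ha'def]
          exact Finset.sum_update_of_mem (Finset.mem_univ i) a 0
        have h2 : a i + ∑ j ∈ Finset.univ.erase i, a j = ∑ j, a j :=
          Finset.add_sum_erase Finset.univ a (Finset.mem_univ i)
        rw [Finset.erase_eq] at h2
        omega
      have hkey : 6 * d * (∑ j, a j) = 6 * d * (a i) + 6 * d * (∑ j, a' j) := by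
        rw [hsum]; ring
      omega
    · -- no exit here: one forward ring step
      have hstep : gccWB d L (.inl ((⟨z, hz⟩ : ↥(cornerCutCube d L)),
            gccPos d (by omega) m₀)) (.inl (⟨z, hz⟩, gccPos d (by omega) (m₀ + 1))) 1 :=
        gccWB.ofAdj (gcc_adj_ringF d L (by omega) _ m₀)
      have hsup' : ∀ j : Fin d, 0 < a j →
          ∃ s, s < t ∧ (m₀ + 1 + s) % (2 * d) = 2 * (j : ℕ) := by
        intro j hj
        obtain ⟨s, hs, hmod⟩ := hsup j hj
        have hs0 : s ≠ 0 := by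
          intro hc
          rw [hc, Nat.add_zero] at hmod
          exact hcase ⟨j, hmod, hj⟩
        refine ⟨s - 1, by omega, ?_⟩
        have : m₀ + 1 + (s - 1) = m₀ + s := by omega
        rw [this]
        exact hmod
      have hrec := ih (m₀ + 1) z a hz ha hsup'
      have hidx : m₀ + 1 + t = m₀ + (t + 1) := by omega
      rw [hidx] at hrec
      have htot := hstep.trans hrec
      apply htot.mono
      omega

lemma gcc_down_loop (d L : ℕ) (hd : 2 ≤ d) : ∀ (t : ℕ) (m₀ : ℕ) (z : Fin d → ℤ)
    (b : Fin d → ℕ) (hz : z ∈ cornerCutCube d L)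
    (h1 : ∀ i, ((b i : ℕ) : ℤ) ≤ z i)
    (h2 : (L : ℤ) ≤ ∑ i, (z i - ((b i : ℕ) : ℤ)))
    (hmem : (fun j => z j - ((b j : ℕ) : ℤ)) ∈ cornerCutCube d L)
    (hsup : ∀ i : Fin d, 0 < b i →
      ∃ s, 0 < s ∧ s ≤ t ∧ (m₀ + s) % (2 * d) = 2 * (i : ℕ) + 1),
    gccWB d L (.inl (⟨z, hz⟩, gccPos d (by omega) (m₀ + t)))
      (.inl (⟨fun j => z j - ((b j : ℕ) : ℤ), hmem⟩, gccPos d (by omega) m₀))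
      (6 * d * (∑ i, b i) + t) := by
  intro t
  induction t with
  | zero =>
    intro m₀ z b hz h1 h2 hmem hsup
    have hb0 : ∀ i, b i = 0 := by
      intro i
      by_contra hc
      obtain ⟨s, hs1, hs2, -⟩ := hsup i (by omega)
      omega
    have hfun : (⟨fun j => z j - ((b j : ℕ) : ℤ), hmem⟩ :
        ↥(cornerCutCube d L)) = ⟨z, hz⟩ := by
      apply Subtype.ext
      show (fun j => z j - ((b j : ℕ) : ℤ)) = z
      funext j
      rw [hb0 j]
      norm_num
    rw [hfun]
    exact (gccWB.refl d L _).mono (by omega)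
  | succ t ih =>
    intro m₀ z b hz h1 h2 hmem hsup
    have hsums : ∑ i, (z i - ((b i : ℕ) : ℤ)) = (∑ i, z i) - ∑ i, ((b i : ℕ) : ℤ) :=
      Finset.sum_sub_distrib _ _
    have hpp : gccPos d (by omega : 0 < d) (m₀ + (t + 1)) =
        gccPos d (by omega) (m₀ + t + 1) :=
      gccPos_eq d (by omega) (by rw [Nat.add_assoc])
    by_cases hcase : ∃ i : Fin d, ((m₀ + t + 1) % (2 * d) = 2 * (i : ℕ) + 1 ∧ 0 < b i)
    · obtain ⟨i, hi1, hi2⟩ := hcase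
      have h2i : 2 * (i : ℕ) + 1 < 2 * d := by have := i.isLt; omega
      have hble : ((b i : ℕ) : ℤ) ≤ ∑ j, ((b j : ℕ) : ℤ) :=
        Finset.single_le_sum (f := fun j => ((b j : ℕ) : ℤ))
          (fun j _ => by positivity) (Finset.mem_univ i)
      have hblock2 : (L : ℤ) + ((b i : ℕ) : ℤ) ≤ ∑ j, z j := by omega
      set z1 : Fin d → ℤ := fun j => z j - if j = i then ((b i : ℕ) : ℤ) else 0
        with hz1def
      have hsz1 : ∑ j, z1 j = (∑ j, z j) - ((b i : ℕ) : ℤ) := by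
        rw [hz1def, Finset.sum_sub_distrib,
          Finset.sum_ite_eq' Finset.univ i (fun _ => ((b i : ℕ) : ℤ)),
          if_pos (Finset.mem_univ i)]
      have hmemz1 : z1 ∈ cornerCutCube d L := by
        refine ⟨fun j => ?_, ?_⟩
        · constructor
          · show (0:ℤ) ≤ z j - if j = i then ((b i : ℕ) : ℤ) else 0
            split_ifs with hji
            · subst hji
              have := h1 j
              omega
            · have := (hz.1 j).1
              omega
          · show z j - (if j = i then ((b i : ℕ) : ℤ) else 0) ≤ (L : ℤ)
            have := (hz.1 j).2
            split_ifs <;> omega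
        · show (L : ℤ) ≤ ∑ j, z1 j
          omega
      have hblock := gcc_down_block d L hd (b i) hi2 z i hz (h1 i) hblock2 hmemz1
      have hp1 : gccPos d (by omega : 0 < d) (m₀ + t + 1) =
          gccPos d (by omega) (2 * (i : ℕ) + 1) :=
        gccPos_eq d (by omega) (hi1.trans (Nat.mod_eq_of_lt h2i).symm)
      have hp2 : gccPos d (by omega : 0 < d) (2 * (i : ℕ)) =
          gccPos d (by omega) (m₀ + t) := by
        apply gccPos_eq
        rcases succ_mod_cases (2 * d) (m₀ + t) (by omega) with ⟨e1, e2⟩ | ⟨e1, e2⟩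
        · rw [Nat.mod_eq_of_lt (by omega : 2 * (i : ℕ) < 2 * d)]
          omega
        · omega
      rw [← hp1, hp2] at hblock
      rw [hpp]
      -- IH data
      set b' := Function.update b i 0 with hb'def
      have h1' : ∀ j, ((b' j : ℕ) : ℤ) ≤ z1 j := by
        intro j
        show _ ≤ z j - if j = i then ((b i : ℕ) : ℤ) else 0
        rcases eq_or_ne j i with rfl | hne
        · rw [if_pos rfl, hb'def, Function.update_self]
          have := h1 j
          push_cast
          omega
        · rw [if_neg hne, hb'def, Function.update_of_ne hne]
          have := h1 j
          omega
      have hfeq : (fun j => z1 j - ((b' j : ℕ) : ℤ))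
          = fun j => z j - ((b j : ℕ) : ℤ) := by
        funext j
        show z j - (if j = i then ((b i : ℕ) : ℤ) else 0) - _ = _
        rcases eq_or_ne j i with rfl | hne
        · rw [if_pos rfl, hb'def, Function.update_self]
          push_cast
          ring
        · rw [if_neg hne, hb'def, Function.update_of_ne hne]
          ring
      have h2' : (L : ℤ) ≤ ∑ j, (z1 j - ((b' j : ℕ) : ℤ)) := by
        have : ∑ j, (z1 j - ((b' j : ℕ) : ℤ)) = ∑ j, (z j - ((b j : ℕ) : ℤ)) := by
          rw [hfeq]
        omega
      have hmem' : (fun j => z1 j - ((b' j : ℕ) : ℤ)) ∈ cornerCutCube d L := by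
        rw [hfeq]
        exact hmem
      have hsup' : ∀ j : Fin d, 0 < b' j →
          ∃ s, 0 < s ∧ s ≤ t ∧ (m₀ + s) % (2 * d) = 2 * (j : ℕ) + 1 := by
        intro j hj
        have hne : j ≠ i := by
          intro hc
          rw [hc, hb'def, Function.update_self] at hj
          omega
        have hjb : 0 < b j := by
          rw [hb'def, Function.update_of_ne hne] at hj
          exact hj
        obtain ⟨s, hs1, hs2, hmod⟩ := hsup j hjb
        refine ⟨s, hs1, ?_, hmod⟩
        rcases Nat.eq_or_lt_of_le hs2 with hst | hst
        · exfalso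
          rw [hst] at hmod
          rw [(by omega : m₀ + (t + 1) = m₀ + t + 1), hi1] at hmod
          exact hne (Fin.ext (by omega : (j : ℕ) = (i : ℕ)))
        · omega
      have hrec := ih m₀ z1 b' hmemz1 h1' h2' hmem' hsup'
      have hfun : (⟨fun j => z1 j - ((b' j : ℕ) : ℤ), hmem'⟩ :
          ↥(cornerCutCube d L)) = ⟨fun j => z j - ((b j : ℕ) : ℤ), hmem⟩ :=
        Subtype.ext hfeq
      rw [hfun] at hrec
      have htot := hblock.trans hrec
      apply htot.mono
      have hsum : ∑ j, b j = b i + ∑ j, b' j := by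
        have hh1 : ∑ j, b' j = 0 + ∑ j ∈ Finset.univ \ {i}, b j := by
          rw [hb'def]
          exact Finset.sum_update_of_mem (Finset.mem_univ i) b 0
        have hh2 : b i + ∑ j ∈ Finset.univ.erase i, b j = ∑ j, b j :=
          Finset.add_sum_erase Finset.univ b (Finset.mem_univ i)
        rw [Finset.erase_eq] at hh2
        omega
      have hkey : 6 * d * (∑ j, b j) = 6 * d * (b i) + 6 * d * (∑ j, b' j) := by
        rw [hsum]; ring
      omega
    · -- one backward ring step
      have hstep : gccWB d L (.inl ((⟨z, hz⟩ : ↥(cornerCutCube d L)),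
            gccPos d (by omega) (m₀ + t + 1)))
          (.inl (⟨z, hz⟩, gccPos d (by omega) (m₀ + t))) 1 :=
        (gccWB.ofAdj (gcc_adj_ringF d L (by omega) _ (m₀ + t))).symm
      have hsup' : ∀ j : Fin d, 0 < b j →
          ∃ s, 0 < s ∧ s ≤ t ∧ (m₀ + s) % (2 * d) = 2 * (j : ℕ) + 1 := by
        intro j hj
        obtain ⟨s, hs1, hs2, hmod⟩ := hsup j hj
        refine ⟨s, hs1, ?_, hmod⟩
        rcases Nat.eq_or_lt_of_le hs2 with hst | hst
        · exfalso
          rw [hst, (by omega : m₀ + (t + 1) = m₀ + t + 1)] at hmod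
          exact hcase ⟨j, hmod, hj⟩
        · omega
      have hrec := ih m₀ z b hz h1 h2 hmem hsup'
      rw [hpp]
      have htot := hstep.trans hrec
      apply htot.mono
      omega

/-! ### Residue-hitting helpers -/

lemma gcc_hit_pos (n c target : ℕ) (hn : 0 < n) (ht : target < n) :
    ∃ s, 0 < s ∧ s ≤ n ∧ (c + s) % n = target := by
  have hc : c % n < n := Nat.mod_lt _ hn
  have key : ∀ s : ℕ, s < n → (c + s) % n = (c % n + s) % n := by
    intro s hs
    rw [Nat.add_mod, Nat.mod_eq_of_lt hs]
  rcases lt_or_ge (c % n) target with h | h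
  · refine ⟨target - c % n, by omega, by omega, ?_⟩
    rw [key _ (by omega), (by omega : c % n + (target - c % n) = target),
      Nat.mod_eq_of_lt ht]
  · rcases Nat.eq_or_lt_of_le h with heq | hlt
    · refine ⟨n, by omega, le_refl n, ?_⟩
      rw [Nat.add_mod_right]
      omega
    · refine ⟨n + target - c % n, by omega, by omega, ?_⟩
      rw [key _ (by omega), (by omega : c % n + (n + target - c % n) = n + target),
        Nat.add_mod_left, Nat.mod_eq_of_lt ht]

lemma gcc_hit (n c target : ℕ) (hn : 0 < n) (ht : target < n) :
    ∃ s, s < n ∧ (c + s) % n = target := by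
  obtain ⟨s, hs1, hs2, hs3⟩ := gcc_hit_pos n c target hn ht
  rcases Nat.eq_or_lt_of_le hs2 with rfl | hlt
  · refine ⟨0, hn, ?_⟩
    rw [Nat.add_zero]
    rw [Nat.add_mod_right] at hs3
    exact hs3
  · exact ⟨s, hlt, hs3⟩

/-- In the grid-connected-cycles graph built over
`H = {x ∈ ℤ^d : 0 ≤ xᵢ ≤ L, x₁ + ⋯ + x_d ≥ L}`, the distance between any two ring
nodes `x(p^±)` and `y(q^±)` satisfies
`6d·‖x − y‖₁ − 1 ≤ dist ≤ 6d·‖x − y‖₁ + 5d`. -/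
theorem gcc_distance_bounds (d L : ℕ) (hd : 2 ≤ d) (hL : 1 ≤ L)
    (x y : ↥(cornerCutCube d L)) (p q : Fin (2 * d)) :
    6 * (d : ℤ) * (∑ i, |(x : Fin d → ℤ) i - (y : Fin d → ℤ) i|) - 1 ≤
        ((gccGraph d L).dist (Sum.inl (x, p)) (Sum.inl (y, q)) : ℤ) ∧
      ((gccGraph d L).dist (Sum.inl (x, p)) (Sum.inl (y, q)) : ℤ) ≤
        6 * (d : ℤ) * (∑ i, |(x : Fin d → ℤ) i - (y : Fin d → ℤ) i|) + 5 * d := by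
  set a : Fin d → ℕ := fun i => (y.1 i - x.1 i).toNat with hadef
  set b : Fin d → ℕ := fun i => (x.1 i - y.1 i).toNat with hbdef
  have haL : ∀ i, x.1 i + ((a i : ℕ) : ℤ) ≤ (L : ℤ) := by
    intro i
    show x.1 i + (((y.1 i - x.1 i).toNat : ℕ) : ℤ) ≤ (L : ℤ)
    have h1 := (x.2.1 i).2
    have h2 := (y.2.1 i).2
    omega
  have hsupUP : ∀ i : Fin d, 0 < a i →
      ∃ s, s < 2 * d ∧ ((p : ℕ) + s) % (2 * d) = 2 * (i : ℕ) := by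
    intro i _
    exact gcc_hit (2 * d) (p : ℕ) (2 * (i : ℕ)) (by omega) (by have := i.isLt; omega)
  have ph1 := gcc_up_loop d L hd (2 * d) (p : ℕ) x.1 a x.2 haL hsupUP
  set m : Fin d → ℤ := fun j => x.1 j + ((a j : ℕ) : ℤ) with hmdef
  have hy1 : ∀ i, m i - ((b i : ℕ) : ℤ) = y.1 i := by
    intro i
    show x.1 i + (((y.1 i - x.1 i).toNat : ℕ) : ℤ)
        - (((x.1 i - y.1 i).toNat : ℕ) : ℤ) = y.1 i
    omega
  have h1' : ∀ i, ((b i : ℕ) : ℤ) ≤ m i := by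
    intro i
    have h2 := (y.2.1 i).1
    have h3 := hy1 i
    omega
  have h2' : (L : ℤ) ≤ ∑ i, (m i - ((b i : ℕ) : ℤ)) := by
    have e : ∑ i, (m i - ((b i : ℕ) : ℤ)) = ∑ i, y.1 i :=
      Finset.sum_congr rfl (fun i _ => hy1 i)
    rw [e]
    exact y.2.2
  have hfy : (fun j => m j - ((b j : ℕ) : ℤ)) = y.1 := funext hy1
  have hmem2 : (fun j => m j - ((b j : ℕ) : ℤ)) ∈ cornerCutCube d L := by
    rw [hfy]; exact y.2
  have hsupDN : ∀ i : Fin d, 0 < b i →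
      ∃ s, 0 < s ∧ s ≤ 2 * d ∧ ((p : ℕ) + s) % (2 * d) = 2 * (i : ℕ) + 1 := by
    intro i _
    exact gcc_hit_pos (2 * d) (p : ℕ) (2 * (i : ℕ) + 1) (by omega)
      (by have := i.isLt; omega)
  have ph2 := gcc_down_loop d L hd (2 * d) (p : ℕ) m b
    (gcc_mem_up d L x.1 a x.2 haL) h1' h2' hmem2 hsupDN
  have hye : (⟨fun j => m j - ((b j : ℕ) : ℤ), hmem2⟩ : ↥(cornerCutCube d L)) = y :=
    Subtype.ext hfy
  rw [hye] at ph2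
  have hp : gccPos d (by omega : 0 < d) ((p : ℕ)) = p :=
    Fin.ext (Nat.mod_eq_of_lt p.isLt)
  rw [hp] at ph1 ph2
  have ph3 := gcc_wb_ring_any d L (by omega) y p q
  have htot := (ph1.trans ph2).trans ph3
  obtain ⟨w, hw⟩ := htot
  have hdist := SimpleGraph.dist_le w
  have hS : (∑ i, ((a i : ℕ) : ℤ)) + (∑ i, ((b i : ℕ) : ℤ))
      = ∑ i, |x.1 i - y.1 i| := by
    rw [← Finset.sum_add_distrib]
    apply Finset.sum_congr rfl
    intro i _
    show (((y.1 i - x.1 i).toNat : ℕ) : ℤ) + (((x.1 i - y.1 i).toNat : ℕ) : ℤ)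
      = |x.1 i - y.1 i|
    rcases le_or_gt (x.1 i) (y.1 i) with h | h
    · rw [abs_of_nonpos (by omega : x.1 i - y.1 i ≤ 0)]
      omega
    · rw [abs_of_pos (by omega : 0 < x.1 i - y.1 i)]
      omega
  constructor
  · -- lower bound
    have hreach : (gccGraph d L).Reachable (Sum.inl (x, p)) (Sum.inl (y, q)) :=
      w.reachable
    obtain ⟨w0, hw0⟩ := hreach.exists_walk_length_eq_dist
    have hpsi := gcc_psi_le_length d L (by omega) y q (Sum.inl (x, p)) w0
    rw [hw0] at hpsi
    have hpsival : gccPsi d L y.1 (Sum.inl (x, p)) = gccH d y.1 x.1 (p : ℕ) := rfl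
    rw [hpsival] at hpsi
    by_cases hxy : (x : Fin d → ℤ) = y.1
    · have hzero : ∑ i, |(x : Fin d → ℤ) i - (y : Fin d → ℤ) i| = 0 := by
        rw [hxy]
        simp
      rw [hzero]
      have hnn : (0 : ℤ) ≤ ((gccGraph d L).dist (Sum.inl (x, p)) (Sum.inl (y, q)) : ℤ) :=
        Int.natCast_nonneg _
      linarith
    · rw [gccH, if_neg hxy] at hpsi
      have hchi := gccChi_nonneg d y.1 x.1 (p : ℕ)
      have hFval : gccF d y.1 x.1 = ∑ i, |(x : Fin d → ℤ) i - (y : Fin d → ℤ) i| := rfl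
      rw [hFval] at hpsi
      linarith
  · -- upper bound
    have hlen : ((gccGraph d L).dist (Sum.inl (x, p)) (Sum.inl (y, q)) : ℤ) ≤
        ((6 * d * (∑ i, a i) + 2 * d + (6 * d * (∑ i, b i) + 2 * d) + d : ℕ) : ℤ) := by
      exact_mod_cast le_trans hdist hw
    have hcast : ((6 * d * (∑ i, a i) + 2 * d + (6 * d * (∑ i, b i) + 2 * d) + d : ℕ) : ℤ)
        = 6 * (d : ℤ) * (∑ i, ((a i : ℕ) : ℤ)) + 6 * (d : ℤ) * (∑ i, ((b i : ℕ) : ℤ))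
          + 5 * (d : ℤ) := by
      push_cast
      ring
    have e : 6 * (d : ℤ) * (∑ i, ((a i : ℕ) : ℤ)) + 6 * (d : ℤ) * (∑ i, ((b i : ℕ) : ℤ))
        = 6 * (d : ℤ) * (∑ i, |(x : Fin d → ℤ) i - (y : Fin d → ℤ) i|) := by
      rw [← hS]
      ring
    linarith
end
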